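/- arXiv:2504.21115 — 2 statements merged into one kernel-verified Lean document; each statement's English description precedes it below -/
import Mathlib

section
/- For every positive integer n, the apex n×n grid A_n is K_6-minor-free. -/
/-- A set of vertices is connected in `G` if the induced subgraph is connected
(in particular, it is nonempty). -/
def ConnectedIn {V : Type*} (G : SimpleGraph V) (S : Set V) : Prop :=
  (G.induce S).Connected

/-- `H` is a minor of `G`: there is a minor model of `H` in `G`, i.e. a family of
nonempty, connected, pairwise disjoint branch sets, with an edge of `G` between the
branch sets of any two vertices adjacent in `H`. -/
def IsMinor {α β : Type*} (H : SimpleGraph α) (G : SimpleGraph β) : Prop :=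
  ∃ φ : α → Set β,
    (∀ a, ConnectedIn G (φ a)) ∧
    (Pairwise fun a b => Disjoint (φ a) (φ b)) ∧
    (∀ a b : α, H.Adj a b → ∃ u ∈ φ a, ∃ v ∈ φ b, G.Adj u v)

/-- `H` is an induced minor of `G`: as for a minor model, but two distinct branch sets
are joined by an edge of `G` *iff* the corresponding vertices are adjacent in `H`. -/
def IsInducedMinor {α β : Type*} (H : SimpleGraph α) (G : SimpleGraph β) : Prop :=
  ∃ φ : α → Set β,
    (∀ a, ConnectedIn G (φ a)) ∧
    (Pairwise fun a b => Disjoint (φ a) (φ b)) ∧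
    (∀ a b : α, a ≠ b → (H.Adj a b ↔ ∃ u ∈ φ a, ∃ v ∈ φ b, G.Adj u v))

/-- `G` is a region intersection graph over `H`: every vertex `v` of `G` is assigned a
connected subgraph (region) `R v` of `H` such that two distinct vertices of `G` are
adjacent iff their regions intersect. -/
def IsRIG {α β : Type*} (G : SimpleGraph α) (H : SimpleGraph β) : Prop :=
  ∃ R : α → Set β,
    (∀ v, ConnectedIn H (R v)) ∧
    (∀ u v : α, u ≠ v → (G.Adj u v ↔ (R u ∩ R v).Nonempty))

/-- Identification relation used to build the internal vertices of the `ℓ`-subdivision: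
the `i`-th internal vertex of the edge directed as `(u, v)` equals the `(ℓ-1-i)`-th
internal vertex of the edge directed as `(v, u)`. -/
def SubdivRel {V : Type*} (G : SimpleGraph V) (ℓ : ℕ) :
    ({d : V × V // G.Adj d.1 d.2} × Fin ℓ) → ({d : V × V // G.Adj d.1 d.2} × Fin ℓ) → Prop :=
  fun a b => a.1.1.1 = b.1.1.2 ∧ a.1.1.2 = b.1.1.1 ∧ (a.2 : ℕ) + (b.2 : ℕ) + 1 = ℓ

/-- Vertices of the `ℓ`-subdivision of `G`: the branching (original) vertices together
with `ℓ` internal (subdivision) vertices on each edge. -/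
def SubdivVert {V : Type*} (G : SimpleGraph V) (ℓ : ℕ) : Type _ :=
  V ⊕ Quot (SubdivRel G ℓ)

/-- The `ℓ`-subdivision `G^(ℓ)` of `G`: every edge of `G` is replaced by a path with
`ℓ + 1` edges (so with `ℓ` new internal vertices). -/
def subdiv {V : Type*} (G : SimpleGraph V) (ℓ : ℕ) : SimpleGraph (SubdivVert G ℓ) :=
  SimpleGraph.fromRel (fun x y =>
    (ℓ = 0 ∧ ∃ u v : V, G.Adj u v ∧ x = Sum.inl u ∧ y = Sum.inl v) ∨
    (∃ (d : {d : V × V // G.Adj d.1 d.2}) (i : Fin ℓ),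
      (i : ℕ) = 0 ∧ x = Sum.inl d.1.1 ∧ y = Sum.inr (Quot.mk _ (d, i))) ∨
    (∃ (d : {d : V × V // G.Adj d.1 d.2}) (i j : Fin ℓ),
      (i : ℕ) + 1 = (j : ℕ) ∧ x = Sum.inr (Quot.mk _ (d, i)) ∧ y = Sum.inr (Quot.mk _ (d, j))))

/-- Adjacency in the `n × n` grid graph. -/
def GridAdj (n : ℕ) : (Fin n × Fin n) → (Fin n × Fin n) → Prop := fun p q =>
  (p.1 = q.1 ∧ (p.2 : ℕ) + 1 = (q.2 : ℕ)) ∨ ((p.1 : ℕ) + 1 = (q.1 : ℕ) ∧ p.2 = q.2)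

/-- The apex `n × n` grid `A_n`: the `n × n` grid together with one extra vertex
adjacent to all grid vertices. -/
def apexGrid (n : ℕ) : SimpleGraph ((Fin n × Fin n) ⊕ Unit) :=
  SimpleGraph.fromRel (fun x y =>
    (∃ p q : Fin n × Fin n, x = Sum.inl p ∧ y = Sum.inl q ∧ GridAdj n p q) ∨
    (∃ p : Fin n × Fin n, x = Sum.inl p ∧ y = Sum.inr ()))

/-- The disjoint union of `n` copies of the graph `G`. -/
def nCopies {V : Type*} (n : ℕ) (G : SimpleGraph V) : SimpleGraph (Fin n × V) :=
  SimpleGraph.fromRel (fun x y => x.1 = y.1 ∧ G.Adj x.2 y.2)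

namespace K6P

abbrev Pt := ℤ × ℤ
abbrev Stp := Pt × Pt

def UStep (s : Stp) : Prop :=
  (s.2.1 = s.1.1 + 1 ∧ s.2.2 = s.1.2) ∨ (s.2.1 = s.1.1 - 1 ∧ s.2.2 = s.1.2) ∨
  (s.2.1 = s.1.1 ∧ s.2.2 = s.1.2 + 1) ∨ (s.2.1 = s.1.1 ∧ s.2.2 = s.1.2 - 1)

instance : DecidablePred UStep := fun s => by unfold UStep; infer_instance

def IsWalk : List Stp → Pt → Pt → Prop
  | [], a, b => a = b
  | s :: L, a, b => s.1 = a ∧ UStep s ∧ IsWalk L s.2 b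

def wverts (L : List Stp) : List Pt := L.flatMap (fun s => [s.1, s.2])

@[simp] lemma wverts_nil : wverts [] = [] := rfl

lemma mem_wverts {L : List Stp} {v : Pt} :
    v ∈ wverts L ↔ ∃ s ∈ L, v = s.1 ∨ v = s.2 := by
  simp [wverts]

lemma mem_wverts_cons {s : Stp} {L : List Stp} {v : Pt} :
    v ∈ wverts (s :: L) ↔ (v = s.1 ∨ v = s.2 ∨ v ∈ wverts L) := by
  simp [wverts]

lemma mem_wverts_append {L M : List Stp} {v : Pt} :
    v ∈ wverts (L ++ M) ↔ v ∈ wverts L ∨ v ∈ wverts M := by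
  simp [wverts]

def ind (Q : Prop) [Decidable Q] : ZMod 2 := if Q then 1 else 0

lemma ind_congr {Q R : Prop} [Decidable Q] [Decidable R] (h : Q ↔ R) : ind Q = ind R := by
  unfold ind; split_ifs with h1 h2 <;> tauto

def par (L : List Stp) (f : Stp → Prop) [DecidablePred f] : ZMod 2 :=
  (L.countP (fun s => decide (f s)) : ℕ)

@[simp] lemma par_nil (f : Stp → Prop) [DecidablePred f] : par [] f = 0 := by
  simp [par]

lemma par_cons (s : Stp) (L : List Stp) (f : Stp → Prop) [DecidablePred f] :
    par (s :: L) f = ind (f s) + par L f := by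
  unfold par ind
  rw [List.countP_cons]
  by_cases h : f s <;> simp [h, add_comm]

lemma par_append (L M : List Stp) (f : Stp → Prop) [DecidablePred f] :
    par (L ++ M) f = par L f + par M f := by
  unfold par; rw [List.countP_append]; push_cast; ring

lemma par_eq_zero {L : List Stp} {f : Stp → Prop} [DecidablePred f]
    (h : ∀ s ∈ L, ¬ f s) : par L f = 0 := by
  induction L with
  | nil => simp
  | cons s L ih =>
      rw [par_cons]
      rw [ih (fun t ht => h t (List.mem_cons_of_mem s ht))]
      have := h s (List.mem_cons_self (a := s) (l := L))
      simp [ind, this]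

def rev (L : List Stp) : List Stp := (L.map (fun s => (s.2, s.1))).reverse

lemma par_rev (L : List Stp) (f : Stp → Prop) [DecidablePred f]
    (hf : ∀ s : Stp, f (s.2, s.1) ↔ f s) : par (rev L) f = par L f := by
  unfold par rev
  rw [List.countP_reverse, List.countP_map]
  congr 1
  apply List.countP_congr
  intro s _
  simp only [Function.comp]
  by_cases h : f s
  · simp [h, (hf s).mpr h]
  · have : ¬ f (s.2, s.1) := fun hc => h ((hf s).mp hc)
    simp [h, this]

lemma mem_wverts_rev {L : List Stp} {v : Pt} : v ∈ wverts (rev L) ↔ v ∈ wverts L := by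
  rw [mem_wverts, mem_wverts]
  unfold rev
  constructor
  · rintro ⟨s, hs, h⟩
    rw [List.mem_reverse, List.mem_map] at hs
    obtain ⟨t, ht, rfl⟩ := hs
    exact ⟨t, ht, by tauto⟩
  · rintro ⟨s, hs, h⟩
    refine ⟨(s.2, s.1), ?_, by tauto⟩
    rw [List.mem_reverse, List.mem_map]
    exact ⟨s, hs, rfl⟩

lemma ustep_symm {s : Stp} (h : UStep s) : UStep (s.2, s.1) := by
  obtain ⟨⟨a, b⟩, ⟨c, d⟩⟩ := s
  unfold UStep at *
  simp only at *
  omega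

lemma isWalk_append {L M : List Stp} {a b c : Pt}
    (hL : IsWalk L a b) (hM : IsWalk M b c) : IsWalk (L ++ M) a c := by
  induction L generalizing a with
  | nil => cases hL; exact hM
  | cons s L ih =>
      obtain ⟨h1, h2, h3⟩ := hL
      exact ⟨h1, h2, ih h3⟩

lemma isWalk_single {p q : Pt} (h : UStep (p, q)) : IsWalk [(p, q)] p q := ⟨rfl, h, rfl⟩

lemma isWalk_rev {L : List Stp} {a b : Pt} (hL : IsWalk L a b) : IsWalk (rev L) b a := by
  induction L generalizing a with
  | nil => cases hL; exact rfl
  | cons s L ih =>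
      obtain ⟨h1, h2, h3⟩ := hL
      have : rev (s :: L) = rev L ++ [(s.2, s.1)] := by simp [rev]
      rw [this]
      exact isWalk_append (ih h3) (h1 ▸ isWalk_single (ustep_symm h2))

lemma walk_ustep {L : List Stp} {a b : Pt} (hL : IsWalk L a b) : ∀ s ∈ L, UStep s := by
  induction L generalizing a with
  | nil => intro s hs; cases hs
  | cons s L ih =>
      obtain ⟨h1, h2, h3⟩ := hL
      intro t ht
      rcases List.mem_cons.mp ht with rfl | ht
      · exact h2
      · exact ih h3 t ht

lemma walk_ends_mem {L : List Stp} {a b : Pt} (hL : IsWalk L a b) (hne : L ≠ []) :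
    a ∈ wverts L ∧ b ∈ wverts L := by
  constructor
  · cases L with
    | nil => exact absurd rfl hne
    | cons s L =>
        obtain ⟨h1, _, _⟩ := hL
        exact mem_wverts_cons.mpr (Or.inl h1.symm)
  · induction L generalizing a with
    | nil => exact absurd rfl hne
    | cons s L ih =>
        obtain ⟨h1, h2, h3⟩ := hL
        cases L with
        | nil => cases h3; exact mem_wverts_cons.mpr (Or.inr (Or.inl rfl))
        | cons t M => exact mem_wverts_cons.mpr (Or.inr (Or.inr (ih h3 (by simp))))

/-! Parity predicates -/

@[reducible] def Hcr (a b : ℤ) (s : Stp) : Prop :=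
  s.1.2 = s.2.2 ∧ s.1.2 ≤ b ∧ (s.1.1 = a ∧ s.2.1 = a + 1 ∨ s.2.1 = a ∧ s.1.1 = a + 1)

@[reducible] def HAt (a b : ℤ) (s : Stp) : Prop :=
  s.1.2 = b ∧ s.2.2 = b ∧ (s.1.1 = a ∧ s.2.1 = a + 1 ∨ s.2.1 = a ∧ s.1.1 = a + 1)

@[reducible] def Hup (a b : ℤ) (s : Stp) : Prop :=
  s.1.2 = s.2.2 ∧ b ≤ s.1.2 ∧ (s.1.1 = a ∧ s.2.1 = a + 1 ∨ s.2.1 = a ∧ s.1.1 = a + 1)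

@[reducible] def Hcol (a : ℤ) (s : Stp) : Prop :=
  s.1.2 = s.2.2 ∧ (s.1.1 = a ∧ s.2.1 = a + 1 ∨ s.2.1 = a ∧ s.1.1 = a + 1)

@[reducible] def Ved (a b : ℤ) (s : Stp) : Prop :=
  s.1.1 = a ∧ s.2.1 = a ∧ (s.1.2 = b ∧ s.2.2 = b + 1 ∨ s.2.2 = b ∧ s.1.2 = b + 1)

@[reducible] def Reg (x y : ℤ) (v : Pt) : Prop := v.1 = x + 1 ∧ v.2 ≤ y

instance (a b : ℤ) : DecidablePred (Hcr a b) := fun s => by unfold Hcr; infer_instance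
instance (a b : ℤ) : DecidablePred (HAt a b) := fun s => by unfold HAt; infer_instance
instance (a b : ℤ) : DecidablePred (Hup a b) := fun s => by unfold Hup; infer_instance
instance (a : ℤ) : DecidablePred (Hcol a) := fun s => by unfold Hcol; infer_instance
instance (a b : ℤ) : DecidablePred (Ved a b) := fun s => by unfold Ved; infer_instance
instance (x y : ℤ) : DecidablePred (Reg x y) := fun v => by unfold Reg; infer_instance

def σw (L : List Stp) (p : Pt) : ZMod 2 := par L (Hcr p.1 p.2)
def link (o : Pt) (L : List Stp) : ZMod 2 := par L (Hup (o.1 - 1) o.2)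
def lk (o : Pt) (L : List Stp) : ZMod 2 := link o L + σw L o

lemma σw_append (L M : List Stp) (p : Pt) : σw (L ++ M) p = σw L p + σw M p :=
  par_append _ _ _

lemma σw_rev (L : List Stp) (p : Pt) : σw (rev L) p = σw L p := by
  apply par_rev; intro s
  obtain ⟨⟨a, b⟩, ⟨c, d⟩⟩ := s
  unfold Hcr; simp only; constructor <;> (rintro ⟨h1, h2, h3⟩; exact ⟨by omega, by omega, by omega⟩)

lemma link_append (o : Pt) (L M : List Stp) : link o (L ++ M) = link o L + link o M :=
  par_append _ _ _

lemma link_rev (o : Pt) (L : List Stp) : link o (rev L) = link o L := by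
  apply par_rev; intro s
  obtain ⟨⟨a, b⟩, ⟨c, d⟩⟩ := s
  unfold Hup; simp only; constructor <;> (rintro ⟨h1, h2, h3⟩; exact ⟨by omega, by omega, by omega⟩)

lemma link_cons (o : Pt) (s : Stp) (L : List Stp) :
    link o (s :: L) = ind (Hup (o.1 - 1) o.2 s) + link o L := par_cons _ _ _

lemma lk_append (o : Pt) (L M : List Stp) : lk o (L ++ M) = lk o L + lk o M := by
  unfold lk; rw [σw_append, link_append]; ring

lemma lk_rev (o : Pt) (L : List Stp) : lk o (rev L) = lk o L := by
  unfold lk; rw [σw_rev, link_rev]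

/-! ZMod 2 helpers -/

lemma z2_eq {u v : ZMod 2} (h : u + v = 0) : u = v := by revert h; revert u v; decide

lemma z2_self (u : ZMod 2) : u + u = 0 := by revert u; decide

/-! Pointwise step identities -/

lemma stepH {s : Stp} (hs : UStep s) (x y : ℤ) :
    ind (Hcr x y s) + ind (Hcr (x + 1) y s) =
      ind (Ved (x + 1) y s) + (ind (Reg x y s.1) + ind (Reg x y s.2)) := by
  obtain ⟨⟨u, v⟩, ⟨u', v'⟩⟩ := s
  unfold UStep at hs
  simp only at hs
  unfold ind Hcr Ved Reg
  simp only
  rcases hs with ⟨h1, h2⟩ | ⟨h1, h2⟩ | ⟨h1, h2⟩ | ⟨h1, h2⟩ <;> subst h1 <;> subst h2 <;>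
    (split_ifs <;> first | decide | omega)

lemma stepV (s : Stp) (x y : ℤ) :
    ind (Hcr x y s) + ind (HAt x (y + 1) s) = ind (Hcr x (y + 1) s) := by
  obtain ⟨⟨u, v⟩, ⟨u', v'⟩⟩ := s
  unfold ind Hcr HAt
  simp only
  split_ifs <;> first | decide | omega

lemma stepCol {s : Stp} (hs : UStep s) (a : ℤ) :
    ind (Hcol a s) = ind (s.1.1 ≤ a) + ind (s.2.1 ≤ a) := by
  obtain ⟨⟨u, v⟩, ⟨u', v'⟩⟩ := s
  unfold UStep at hs
  simp only at hs
  unfold ind Hcol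
  simp only
  rcases hs with ⟨h1, h2⟩ | ⟨h1, h2⟩ | ⟨h1, h2⟩ | ⟨h1, h2⟩ <;> subst h1 <;> subst h2 <;>
    (split_ifs <;> first | decide | omega)

lemma stepSplit (s : Stp) (a b : ℤ) :
    ind (Hup (a - 1) b s) + ind (Hcr (a - 1) (b - 1) s) = ind (Hcol (a - 1) s) := by
  obtain ⟨⟨u, v⟩, ⟨u', v'⟩⟩ := s
  unfold ind Hup Hcr Hcol
  simp only
  split_ifs <;> first | decide | omega

/-! Telescoping of vertex indicators along a walk -/

lemma vpar (R : Pt → Prop) [DecidablePred R] :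
    ∀ (L : List Stp) (a b : Pt), IsWalk L a b →
      par L (fun s => R s.1) + par L (fun s => R s.2) = ind (R a) + ind (R b) := by
  intro L
  induction L with
  | nil =>
      intro a b h
      cases h
      simp [z2_self]
  | cons s L ih =>
      intro a b h
      obtain ⟨h1, h2, h3⟩ := h
      rw [par_cons, par_cons]
      have := ih s.2 b h3
      subst h1
      linear_combination this + z2_self (ind (R s.2))

/-! List versions of the master step lemmas -/

lemma par_sumH (L : List Stp) (hL : ∀ s ∈ L, UStep s) (x y : ℤ) :
    par L (Hcr x y) + par L (Hcr (x + 1) y) =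
      par L (Ved (x + 1) y) + (par L (fun s => Reg x y s.1) + par L (fun s => Reg x y s.2)) := by
  induction L with
  | nil => simp
  | cons s L ih =>
      simp only [par_cons]
      have h1 := stepH (hL s (List.mem_cons_self (a := s) (l := L))) x y
      have h2 := ih (fun t ht => hL t (List.mem_cons_of_mem s ht))
      linear_combination h1 + h2

lemma masterH {L : List Stp} {a b : Pt} (hW : IsWalk L a b) (x y : ℤ) :
    σw L (x, y) + σw L (x + 1, y) =
      par L (Ved (x + 1) y) + (ind (Reg x y a) + ind (Reg x y b)) := by
  have h1 := par_sumH L (walk_ustep hW) x y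
  have h2 := vpar (Reg x y) L a b hW
  unfold σw
  simp only
  linear_combination h1 + h2

lemma masterV (L : List Stp) (x y : ℤ) :
    σw L (x, y) + par L (HAt x (y + 1)) = σw L (x, y + 1) := by
  induction L with
  | nil => simp [σw]
  | cons s L ih =>
      unfold σw at *
      simp only [par_cons]
      have h1 := stepV s x y
      linear_combination h1 + ih

/-! The key single-step movement lemma for σ -/

lemma sigma_step {A : List Stp} {a b : Pt} (hA : IsWalk A a b) {p q : Pt}
    (hpq : UStep (p, q)) (hp : p ∉ wverts A) (hq : q ∉ wverts A) :
    σw A p + σw A q = ind (Hup (a.1 - 1) a.2 (p, q)) + ind (Hup (b.1 - 1) b.2 (p, q)) := by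
  have hnotouch : ∀ v : Pt, v ∉ wverts A → ∀ f : Stp → Prop, ∀ _ : DecidablePred f,
      (∀ s, f s → s.1 = v ∨ s.2 = v) → par A f = 0 := by
    intro v hv f _ hf
    apply par_eq_zero
    intro s hs hfs
    rcases hf s hfs with h | h
    · exact hv (mem_wverts.mpr ⟨s, hs, Or.inl h.symm⟩)
    · exact hv (mem_wverts.mpr ⟨s, hs, Or.inr h.symm⟩)
  obtain ⟨p1, p2⟩ := p
  obtain ⟨q1, q2⟩ := q
  unfold UStep at hpq
  simp only at hpq
  rcases hpq with ⟨h1, h2⟩ | ⟨h1, h2⟩ | ⟨h1, h2⟩ | ⟨h1, h2⟩ <;> rw [h1, h2] at hq ⊢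
  · -- right step
    have hm := masterH hA p1 p2
    have hz : par A (Ved (p1 + 1) p2) = 0 := by
      apply hnotouch _ hq _ inferInstance
      intro s hs
      obtain ⟨⟨u, v⟩, ⟨u', v'⟩⟩ := s
      unfold Ved at hs
      simp only at hs ⊢
      rcases hs.2.2 with ⟨e1, e2⟩ | ⟨e1, e2⟩
      · left; rw [Prod.mk.injEq]; exact ⟨hs.1, e1⟩
      · right; rw [Prod.mk.injEq]; exact ⟨hs.2.1, e1⟩
    rw [hz] at hm
    have e1 : ind (Reg p1 p2 a) = ind (Hup (a.1 - 1) a.2 ((p1, p2), (p1 + 1, p2))) := by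
      apply ind_congr; unfold Reg Hup; dsimp only; omega
    have e2 : ind (Reg p1 p2 b) = ind (Hup (b.1 - 1) b.2 ((p1, p2), (p1 + 1, p2))) := by
      apply ind_congr; unfold Reg Hup; dsimp only; omega
    rw [e1, e2] at hm
    linear_combination hm
  · -- left step
    have hm := masterH hA (p1 - 1) p2
    have hrw : (p1 - 1 : ℤ) + 1 = p1 := by ring
    rw [hrw] at hm
    have hz : par A (Ved p1 p2) = 0 := by
      apply hnotouch _ hp _ inferInstance
      intro s hs
      obtain ⟨⟨u, v⟩, ⟨u', v'⟩⟩ := s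
      unfold Ved at hs
      simp only at hs ⊢
      rcases hs.2.2 with ⟨e1, e2⟩ | ⟨e1, e2⟩
      · left; rw [Prod.mk.injEq]; exact ⟨hs.1, e1⟩
      · right; rw [Prod.mk.injEq]; exact ⟨hs.2.1, e1⟩
    rw [hz] at hm
    have e1 : ind (Reg (p1 - 1) p2 a) = ind (Hup (a.1 - 1) a.2 ((p1, p2), (p1 - 1, p2))) := by
      apply ind_congr; unfold Reg Hup; dsimp only; omega
    have e2 : ind (Reg (p1 - 1) p2 b) = ind (Hup (b.1 - 1) b.2 ((p1, p2), (p1 - 1, p2))) := by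
      apply ind_congr; unfold Reg Hup; dsimp only; omega
    rw [e1, e2] at hm
    linear_combination hm
  · -- up step
    have hm := masterV A p1 p2
    have hz : par A (HAt p1 (p2 + 1)) = 0 := by
      apply hnotouch _ hq _ inferInstance
      intro s hs
      obtain ⟨⟨u, v⟩, ⟨u', v'⟩⟩ := s
      unfold HAt at hs
      simp only at hs ⊢
      rcases hs.2.2 with ⟨e1, e2⟩ | ⟨e1, e2⟩
      · left; rw [Prod.mk.injEq]; exact ⟨e1, hs.1⟩
      · right; rw [Prod.mk.injEq]; exact ⟨e1, hs.2.1⟩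
    rw [hz] at hm
    have e1 : ind (Hup (a.1 - 1) a.2 ((p1, p2), (p1, p2 + 1))) = 0 := by
      unfold ind Hup; dsimp only; split_ifs with h; omega; rfl
    have e2 : ind (Hup (b.1 - 1) b.2 ((p1, p2), (p1, p2 + 1))) = 0 := by
      unfold ind Hup; dsimp only; split_ifs with h; omega; rfl
    rw [e1, e2]
    linear_combination hm + z2_self (σw A (p1, p2 + 1))
  · -- down step
    have hm := masterV A p1 (p2 - 1)
    have hrw : (p2 : ℤ) - 1 + 1 = p2 := by ring
    rw [hrw] at hm
    have hz : par A (HAt p1 p2) = 0 := by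
      apply hnotouch _ hp _ inferInstance
      intro s hs
      obtain ⟨⟨u, v⟩, ⟨u', v'⟩⟩ := s
      unfold HAt at hs
      simp only at hs ⊢
      rcases hs.2.2 with ⟨e1, e2⟩ | ⟨e1, e2⟩
      · left; rw [Prod.mk.injEq]; exact ⟨e1, hs.1⟩
      · right; rw [Prod.mk.injEq]; exact ⟨e1, hs.2.1⟩
    rw [hz] at hm
    have e1 : ind (Hup (a.1 - 1) a.2 ((p1, p2), (p1, p2 - 1))) = 0 := by
      unfold ind Hup; dsimp only; split_ifs with h; omega; rfl
    have e2 : ind (Hup (b.1 - 1) b.2 ((p1, p2), (p1, p2 - 1))) = 0 := by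
      unfold ind Hup; dsimp only; split_ifs with h; omega; rfl
    rw [e1, e2]
    linear_combination hm + z2_self (σw A (p1, p2))

/-! Key lemma: σ of A evaluated at endpoints of a disjoint walk B -/

lemma key {A : List Stp} {a b : Pt} (hA : IsWalk A a b) :
    ∀ {B : List Stp} {c d : Pt}, IsWalk B c d → (∀ v ∈ wverts B, v ∉ wverts A) →
      σw A c + σw A d = link a B + link b B := by
  intro B
  induction B with
  | nil =>
      intro c d hB _
      cases hB
      simp [link, z2_self]
  | cons s L ih =>
      intro c d hB hdisj
      obtain ⟨h1, h2, h3⟩ := hB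
      have hc : s.1 ∉ wverts A := hdisj s.1 (mem_wverts_cons.mpr (Or.inl rfl))
      have hq : s.2 ∉ wverts A := hdisj s.2 (mem_wverts_cons.mpr (Or.inr (Or.inl rfl)))
      have hstep : UStep (s.1, s.2) := by
        have : (s.1, s.2) = s := rfl
        rw [this]; exact h2
      have hs1 := sigma_step hA hstep hc hq
      have hIH := ih h3 (fun v hv => hdisj v (mem_wverts_cons.mpr (Or.inr (Or.inr hv))))
      rw [Prod.mk.eta] at hs1
      rw [← h1, link_cons, link_cons]
      linear_combination hs1 + hIH - z2_self (σw A s.2)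

/-! Constancy of σ of a closed walk on connected sets avoiding it -/

lemma const_walk {Z : List Stp} {e : Pt} (hZ : IsWalk Z e e) :
    ∀ {W : List Stp} {p q : Pt}, IsWalk W p q → (∀ v ∈ wverts W, v ∉ wverts Z) →
      σw Z p = σw Z q := by
  intro W
  induction W with
  | nil => intro p q h _; cases h; rfl
  | cons s L ih =>
      intro p q h hdisj
      obtain ⟨h1, h2, h3⟩ := h
      have hc : s.1 ∉ wverts Z := hdisj s.1 (mem_wverts_cons.mpr (Or.inl rfl))
      have hq : s.2 ∉ wverts Z := hdisj s.2 (mem_wverts_cons.mpr (Or.inr (Or.inl rfl)))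
      have hstep : UStep (s.1, s.2) := by
        have : (s.1, s.2) = s := rfl
        rw [this]; exact h2
      have hs1 := sigma_step hZ hstep hc hq
      have : σw Z s.1 = σw Z s.2 := by
        apply z2_eq
        rw [hs1]
        exact z2_self _
      subst h1
      rw [this]
      exact ih h3 (fun v hv => hdisj v (mem_wverts_cons.mpr (Or.inr (Or.inr hv))))

/-! Diagonal shift for closed walks -/

lemma sigma_shift {Z : List Stp} {e : Pt} (hZ : IsWalk Z e e) {o : Pt} (ho : o ∉ wverts Z) :
    σw Z o = σw Z (o.1 - 1, o.2 - 1) := by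
  obtain ⟨o1, o2⟩ := o
  simp only at *
  have hnotouch : ∀ f : Stp → Prop, ∀ _ : DecidablePred f,
      (∀ s, f s → s.1 = ((o1, o2) : Pt) ∨ s.2 = ((o1, o2) : Pt)) → par Z f = 0 := by
    intro f _ hf
    apply par_eq_zero
    intro s hs hfs
    rcases hf s hfs with h | h
    · exact ho (mem_wverts.mpr ⟨s, hs, Or.inl h.symm⟩)
    · exact ho (mem_wverts.mpr ⟨s, hs, Or.inr h.symm⟩)
  -- step 1: σ (o1, o2-1) = σ (o1, o2)
  have hm1 := masterV Z o1 (o2 - 1)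
  have hrw : (o2 : ℤ) - 1 + 1 = o2 := by ring
  rw [hrw] at hm1
  have hz1 : par Z (HAt o1 o2) = 0 := by
    apply hnotouch _ inferInstance
    intro s hs
    unfold HAt at hs
    rcases hs.2.2 with ⟨e1, _⟩ | ⟨e1, _⟩
    · left; ext <;> simp [hs.1, e1]
    · right; ext <;> simp [hs.2.1, e1]
  rw [hz1] at hm1
  -- step 2: σ (o1-1, o2-1) = σ (o1, o2-1)
  have hm2 := masterH hZ (o1 - 1) (o2 - 1)
  have hrw2 : (o1 : ℤ) - 1 + 1 = o1 := by ring
  rw [hrw2] at hm2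
  have hz2 : par Z (Ved o1 (o2 - 1)) = 0 := by
    apply hnotouch _ inferInstance
    intro s hs
    unfold Ved at hs
    rcases hs.2.2 with ⟨e1, e2⟩ | ⟨e1, e2⟩
    · right; ext <;> simp [hs.2.1, e2] <;> omega
    · left; ext <;> simp [hs.1, e2] <;> omega
  rw [hz2] at hm2
  have hind : ind (Reg (o1 - 1) (o2 - 1) e) + ind (Reg (o1 - 1) (o2 - 1) e) = 0 := z2_self _
  have h3 : σw Z (o1 - 1, o2 - 1) = σw Z (o1, o2 - 1) :=
    z2_eq (by linear_combination hm2 + hind)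
  have h4 : σw Z (o1, o2 - 1) = σw Z (o1, o2) := by linear_combination hm1
  exact (h3.trans h4).symm

/-! lk of a closed walk avoiding o vanishes -/

lemma par_congr_sum {f g : Stp → Prop} [DecidablePred f] [DecidablePred g]
    {h : Stp → Prop} [DecidablePred h] (L : List Stp)
    (hpt : ∀ s ∈ L, ind (f s) + ind (g s) = ind (h s)) :
    par L f + par L g = par L h := by
  induction L with
  | nil => simp
  | cons s L ih =>
      simp only [par_cons]
      have h1 := hpt s (List.mem_cons_self (a := s) (l := L))
      have h2 := ih (fun t ht => hpt t (List.mem_cons_of_mem s ht))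
      linear_combination h1 + h2

lemma lk_closed {Z : List Stp} {e : Pt} (hZ : IsWalk Z e e) {o : Pt} (ho : o ∉ wverts Z) :
    lk o Z = 0 := by
  have hsplit : par Z (Hup (o.1 - 1) o.2) + par Z (Hcr (o.1 - 1) (o.2 - 1)) =
      par Z (Hcol (o.1 - 1)) :=
    par_congr_sum Z (fun s _ => stepSplit s o.1 o.2)
  have hcol : par Z (Hcol (o.1 - 1)) =
      par Z (fun s => s.1.1 ≤ o.1 - 1) + par Z (fun s => s.2.1 ≤ o.1 - 1) := by
    have := par_congr_sum (f := fun s => s.1.1 ≤ o.1 - 1) (g := fun s => s.2.1 ≤ o.1 - 1)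
      (h := Hcol (o.1 - 1)) Z (fun s hs => (stepCol (walk_ustep hZ s hs) (o.1 - 1)).symm)
    linear_combination - this
  have htel := vpar (fun v => v.1 ≤ o.1 - 1) Z e e hZ
  have hshift := sigma_shift hZ ho
  unfold lk link σw at *
  linear_combination hsplit + hcol + htel + z2_self (ind ((e : Pt).1 ≤ o.1 - 1)) + hshift

/-! lk only depends on endpoints (for walks avoiding the obstacle) -/

lemma lk_indep {W W' : List Stp} {c d o : Pt} (hW : IsWalk W c d) (hW' : IsWalk W' c d)
    (ho : o ∉ wverts W) (ho' : o ∉ wverts W') : lk o W = lk o W' := by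
  have hclosed : IsWalk (W ++ rev W') c c := isWalk_append hW (isWalk_rev hW')
  have havoid : o ∉ wverts (W ++ rev W') := by
    rw [mem_wverts_append]
    rintro (h | h)
    · exact ho h
    · exact ho' (mem_wverts_rev.mp h)
  have := lk_closed hclosed havoid
  rw [lk_append, lk_rev] at this
  exact z2_eq this

/-! Reciprocity -/

lemma recip {A : List Stp} {a b : Pt} {B : List Stp} {c d : Pt}
    (hA : IsWalk A a b) (hB : IsWalk B c d)
    (hdisj : ∀ v ∈ wverts B, v ∉ wverts A) :
    lk a B + lk b B = lk c A + lk d A := by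
  have h1 := key hA hB hdisj
  have h2 := key hB hA (fun v hv hv2 => hdisj v hv2 hv)
  unfold lk
  linear_combination h1 + h2 + z2_self (link a B) + z2_self (link b B) -
    z2_self (σw A c) - z2_self (σw A d)

/-! Straight rays -/

def Dir (d : Pt) : Prop := d = (1, 0) ∨ d = (-1, 0) ∨ d = (0, 1) ∨ d = (0, -1)

def ray (d : Pt) : Pt → ℕ → List Stp
  | _, 0 => []
  | p, (k + 1) => (p, (p.1 + d.1, p.2 + d.2)) :: ray d (p.1 + d.1, p.2 + d.2) k

lemma ray_walk {d : Pt} (hd : Dir d) :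
    ∀ (k : ℕ) (p : Pt), IsWalk (ray d p k) p (p.1 + k * d.1, p.2 + k * d.2) := by
  intro k
  induction k with
  | zero =>
      intro p
      show p = _
      ext <;> push_cast <;> ring
  | succ k ih =>
      intro p
      refine ⟨rfl, ?_, ?_⟩
      · rcases hd with rfl | rfl | rfl | rfl <;> (unfold UStep; dsimp only; omega)
      · have h := ih (p.1 + d.1, p.2 + d.2)
        have e : ((p.1 + d.1 : ℤ) + (k : ℤ) * d.1, (p.2 + d.2 : ℤ) + (k : ℤ) * d.2)
            = ((p.1 : ℤ) + ((k + 1 : ℕ) : ℤ) * d.1, (p.2 : ℤ) + ((k + 1 : ℕ) : ℤ) * d.2) := by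
          rw [Prod.mk.injEq]; push_cast; constructor <;> ring
        rw [e] at h
        exact h

lemma mem_ray (d : Pt) :
    ∀ (k : ℕ) (p v : Pt), v ∈ wverts (ray d p k) ↔
      (1 ≤ k ∧ ∃ i : ℤ, 0 ≤ i ∧ i ≤ k ∧ v = (p.1 + i * d.1, p.2 + i * d.2)) := by
  intro k
  induction k with
  | zero => intro p v; simp [ray]
  | succ k ih =>
      intro p v
      show v ∈ wverts (_ :: _) ↔ _
      rw [mem_wverts_cons, ih]
      constructor
      · rintro (rfl | h | ⟨hk, i, h0, h1, rfl⟩)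
        · exact ⟨by omega, 0, by omega, by omega, by ext <;> dsimp <;> ring⟩
        · refine ⟨by omega, 1, by omega, by omega, ?_⟩
          rw [h]; ext <;> dsimp <;> ring
        · refine ⟨by omega, i + 1, by omega, by push_cast; omega, ?_⟩
          ext <;> dsimp <;> ring
      · rintro ⟨hk, i, h0, h1, rfl⟩
        by_cases hi : i = 0
        · subst hi; left; ext <;> dsimp <;> ring
        · by_cases hk0 : k = 0
          · subst hk0
            have : i = 1 := by omega
            subst this
            right; left; ext <;> dsimp <;> ring
          · right; right
            refine ⟨by omega, i - 1, by omega, by push_cast at h1 ⊢; omega, ?_⟩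
            ext <;> dsimp <;> ring

/-! Specializations -/

lemma rayR_walk (p : Pt) (k : ℕ) : IsWalk (ray (1, 0) p k) p (p.1 + k, p.2) := by
  have := ray_walk (d := (1, 0)) (Or.inl rfl) k p
  simpa using this

lemma rayL_walk (p : Pt) (k : ℕ) : IsWalk (ray (-1, 0) p k) p (p.1 - k, p.2) := by
  have := ray_walk (d := (-1, 0)) (Or.inr (Or.inl rfl)) k p
  have e : ((p.1 : ℤ) + (k : ℤ) * (-1 : ℤ), (p.2 : ℤ) + (k : ℤ) * (0 : ℤ)) = ((p.1 : ℤ) - k, p.2) := by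
    rw [Prod.mk.injEq]; constructor <;> ring
  rwa [e] at this

lemma rayU_walk (p : Pt) (k : ℕ) : IsWalk (ray (0, 1) p k) p (p.1, p.2 + k) := by
  have := ray_walk (d := (0, 1)) (Or.inr (Or.inr (Or.inl rfl))) k p
  simpa using this

lemma rayD_walk (p : Pt) (k : ℕ) : IsWalk (ray (0, -1) p k) p (p.1, p.2 - k) := by
  have := ray_walk (d := (0, -1)) (Or.inr (Or.inr (Or.inr rfl))) k p
  have e : ((p.1 : ℤ) + (k : ℤ) * (0 : ℤ), (p.2 : ℤ) + (k : ℤ) * (-1 : ℤ)) = ((p.1 : ℤ), p.2 - k) := by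
    rw [Prod.mk.injEq]; constructor <;> ring
  rwa [e] at this

lemma mem_rayR {p v : Pt} {k : ℕ} :
    v ∈ wverts (ray (1, 0) p k) ↔ (1 ≤ k ∧ v.2 = p.2 ∧ p.1 ≤ v.1 ∧ v.1 ≤ p.1 + k) := by
  rw [mem_ray]
  constructor
  · rintro ⟨hk, i, h0, h1, rfl⟩
    dsimp; omega
  · rintro ⟨hk, h1, h2, h3⟩
    refine ⟨hk, v.1 - p.1, by omega, by omega, ?_⟩
    ext <;> dsimp <;> omega

lemma mem_rayL {p v : Pt} {k : ℕ} :
    v ∈ wverts (ray (-1, 0) p k) ↔ (1 ≤ k ∧ v.2 = p.2 ∧ p.1 - k ≤ v.1 ∧ v.1 ≤ p.1) := by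
  rw [mem_ray]
  constructor
  · rintro ⟨hk, i, h0, h1, rfl⟩
    dsimp; omega
  · rintro ⟨hk, h1, h2, h3⟩
    refine ⟨hk, p.1 - v.1, by omega, by omega, ?_⟩
    ext <;> dsimp <;> omega

lemma mem_rayU {p v : Pt} {k : ℕ} :
    v ∈ wverts (ray (0, 1) p k) ↔ (1 ≤ k ∧ v.1 = p.1 ∧ p.2 ≤ v.2 ∧ v.2 ≤ p.2 + k) := by
  rw [mem_ray]
  constructor
  · rintro ⟨hk, i, h0, h1, rfl⟩
    dsimp; omega
  · rintro ⟨hk, h1, h2, h3⟩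
    refine ⟨hk, v.2 - p.2, by omega, by omega, ?_⟩
    ext <;> dsimp <;> omega

lemma mem_rayD {p v : Pt} {k : ℕ} :
    v ∈ wverts (ray (0, -1) p k) ↔ (1 ≤ k ∧ v.1 = p.1 ∧ p.2 - k ≤ v.2 ∧ v.2 ≤ p.2) := by
  rw [mem_ray]
  constructor
  · rintro ⟨hk, i, h0, h1, rfl⟩
    dsimp; omega
  · rintro ⟨hk, h1, h2, h3⟩
    refine ⟨hk, p.2 - v.2, by omega, by omega, ?_⟩
    ext <;> dsimp <;> omega

def good (s t x y z : Pt) : Prop :=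
  ∃ L, IsWalk L s t ∧ x ∉ wverts L ∧ y ∉ wverts L ∧ z ∉ wverts L

lemma pick4 {s t x y z : Pt} {W1 W2 W3 W4 : List Stp}
    (h1 : IsWalk W1 s t) (h2 : IsWalk W2 s t) (h3 : IsWalk W3 s t) (h4 : IsWalk W4 s t)
    (d12 : ∀ v, v ∈ wverts W1 → v ∈ wverts W2 → v = s ∨ v = t)
    (d13 : ∀ v, v ∈ wverts W1 → v ∈ wverts W3 → v = s ∨ v = t)
    (d14 : ∀ v, v ∈ wverts W1 → v ∈ wverts W4 → v = s ∨ v = t)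
    (d23 : ∀ v, v ∈ wverts W2 → v ∈ wverts W3 → v = s ∨ v = t)
    (d24 : ∀ v, v ∈ wverts W2 → v ∈ wverts W4 → v = s ∨ v = t)
    (d34 : ∀ v, v ∈ wverts W3 → v ∈ wverts W4 → v = s ∨ v = t)
    (hx : x ≠ s) (hx' : x ≠ t) (hy : y ≠ s) (hy' : y ≠ t) (hz : z ≠ s) (hz' : z ≠ t) :
    good s t x y z := by
  have nd : ∀ (w : Pt), w ≠ s → w ≠ t →
      ∀ (Wa Wb : List Stp), (∀ v, v ∈ wverts Wa → v ∈ wverts Wb → v = s ∨ v = t) →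
      w ∈ wverts Wa → w ∈ wverts Wb → False := by
    intro w hws hwt Wa Wb hab ha hb
    rcases hab w ha hb with rfl | rfl
    · exact hws rfl
    · exact hwt rfl
  by_cases e1 : x ∈ wverts W1 ∨ y ∈ wverts W1 ∨ z ∈ wverts W1
  case neg =>
    push_neg at e1
    exact ⟨W1, h1, e1.1, e1.2.1, e1.2.2⟩
  by_cases e2 : x ∈ wverts W2 ∨ y ∈ wverts W2 ∨ z ∈ wverts W2
  case neg =>
    push_neg at e2
    exact ⟨W2, h2, e2.1, e2.2.1, e2.2.2⟩
  by_cases e3 : x ∈ wverts W3 ∨ y ∈ wverts W3 ∨ z ∈ wverts W3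
  case neg =>
    push_neg at e3
    exact ⟨W3, h3, e3.1, e3.2.1, e3.2.2⟩
  by_cases e4 : x ∈ wverts W4 ∨ y ∈ wverts W4 ∨ z ∈ wverts W4
  case neg =>
    push_neg at e4
    exact ⟨W4, h4, e4.1, e4.2.1, e4.2.2⟩
  exfalso
  rcases e1 with m1 | m1 | m1 <;> rcases e2 with m2 | m2 | m2 <;>
    rcases e3 with m3 | m3 | m3 <;> rcases e4 with m4 | m4 | m4 <;>
    first
      | exact nd x hx hx' _ _ d12 m1 m2
      | exact nd x hx hx' _ _ d13 m1 m3
      | exact nd x hx hx' _ _ d14 m1 m4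
      | exact nd x hx hx' _ _ d23 m2 m3
      | exact nd x hx hx' _ _ d24 m2 m4
      | exact nd x hx hx' _ _ d34 m3 m4
      | exact nd y hy hy' _ _ d12 m1 m2
      | exact nd y hy hy' _ _ d13 m1 m3
      | exact nd y hy hy' _ _ d14 m1 m4
      | exact nd y hy hy' _ _ d23 m2 m3
      | exact nd y hy hy' _ _ d24 m2 m4
      | exact nd y hy hy' _ _ d34 m3 m4
      | exact nd z hz hz' _ _ d12 m1 m2
      | exact nd z hz hz' _ _ d13 m1 m3
      | exact nd z hz hz' _ _ d14 m1 m4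
      | exact nd z hz hz' _ _ d23 m2 m3
      | exact nd z hz hz' _ _ d24 m2 m4
      | exact nd z hz hz' _ _ d34 m3 m4

lemma walk_cast {L : List Stp} {a b b' : Pt} (h : IsWalk L a b) (e : b = b') : IsWalk L a b' :=
  e ▸ h

lemma caseA (s1 s2 : ℤ) (dx dy : ℕ) (hdx : 1 ≤ dx) (hdy : 1 ≤ dy) (x y z : Pt)
    (hx : x ≠ (s1, s2)) (hx' : x ≠ (s1 + dx, s2 + dy))
    (hy : y ≠ (s1, s2)) (hy' : y ≠ (s1 + dx, s2 + dy))
    (hz : z ≠ (s1, s2)) (hz' : z ≠ (s1 + dx, s2 + dy)) :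
    good (s1, s2) (s1 + dx, s2 + dy) x y z := by
  set W1 : List Stp := ray (1, 0) (s1, s2) dx ++ ray (0, 1) (s1 + dx, s2) dy with hW1
  set W2 : List Stp := ray (0, 1) (s1, s2) dy ++ ray (1, 0) (s1, s2 + dy) dx with hW2
  set W3 : List Stp := ray (0, -1) (s1, s2) 1 ++ (ray (1, 0) (s1, s2 - 1) (dx + 1) ++
      (ray (0, 1) (s1 + dx + 1, s2 - 1) (dy + 1) ++ ray (-1, 0) (s1 + dx + 1, s2 + dy) 1)) with hW3
  set W4 : List Stp := ray (-1, 0) (s1, s2) 1 ++ (ray (0, 1) (s1 - 1, s2) (dy + 1) ++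
      (ray (1, 0) (s1 - 1, s2 + dy + 1) (dx + 1) ++ ray (0, -1) (s1 + dx, s2 + dy + 1) 1)) with hW4
  have w1 : IsWalk W1 (s1, s2) (s1 + dx, s2 + dy) :=
    isWalk_append (rayR_walk (s1, s2) dx) (rayU_walk (s1 + (dx : ℤ), s2) dy)
  have w2 : IsWalk W2 (s1, s2) (s1 + dx, s2 + dy) :=
    isWalk_append (rayU_walk (s1, s2) dy) (rayR_walk (s1, s2 + (dy : ℤ)) dx)
  have w3 : IsWalk W3 (s1, s2) (s1 + dx, s2 + dy) := by
    refine isWalk_append (walk_cast (rayD_walk (s1, s2) 1) ?_)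
      (isWalk_append (walk_cast (rayR_walk (s1, s2 - 1) (dx + 1)) ?_)
        (isWalk_append (walk_cast (rayU_walk (s1 + dx + 1, s2 - 1) (dy + 1)) ?_)
          (walk_cast (rayL_walk (s1 + dx + 1, s2 + dy) 1) ?_))) <;>
      (rw [Prod.mk.injEq]; push_cast; omega)
  have w4 : IsWalk W4 (s1, s2) (s1 + dx, s2 + dy) := by
    refine isWalk_append (walk_cast (rayL_walk (s1, s2) 1) ?_)
      (isWalk_append (walk_cast (rayU_walk (s1 - 1, s2) (dy + 1)) ?_)
        (isWalk_append (walk_cast (rayR_walk (s1 - 1, s2 + dy + 1) (dx + 1)) ?_)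
          (walk_cast (rayD_walk (s1 + dx, s2 + dy + 1) 1) ?_))) <;>
      (rw [Prod.mk.injEq]; push_cast; omega)
  apply pick4 w1 w2 w3 w4 <;>
    first
    | assumption
    | (intro v hva hvb
       obtain ⟨v1, v2⟩ := v
       simp only [hW1, hW2, hW3, hW4, mem_wverts_append, mem_rayR, mem_rayL, mem_rayU,
         mem_rayD] at hva hvb
       rw [Prod.mk.injEq, Prod.mk.injEq]
       push_cast at hva hvb ⊢
       omega)

lemma caseB (s1 s2 : ℤ) (dx : ℕ) (hdx : 1 ≤ dx) (x y z : Pt)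
    (hx : x ≠ (s1, s2)) (hx' : x ≠ (s1 + dx, s2))
    (hy : y ≠ (s1, s2)) (hy' : y ≠ (s1 + dx, s2))
    (hz : z ≠ (s1, s2)) (hz' : z ≠ (s1 + dx, s2)) :
    good (s1, s2) (s1 + dx, s2) x y z := by
  set W1 : List Stp := ray (1, 0) (s1, s2) dx with hW1
  set W2 : List Stp := ray (0, 1) (s1, s2) 1 ++ (ray (1, 0) (s1, s2 + 1) dx ++
      ray (0, -1) (s1 + dx, s2 + 1) 1) with hW2
  set W3 : List Stp := ray (0, -1) (s1, s2) 1 ++ (ray (1, 0) (s1, s2 - 1) dx ++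
      ray (0, 1) (s1 + dx, s2 - 1) 1) with hW3
  set W4 : List Stp := ray (-1, 0) (s1, s2) 1 ++ (ray (0, 1) (s1 - 1, s2) 2 ++
      (ray (1, 0) (s1 - 1, s2 + 2) (dx + 2) ++
        (ray (0, -1) (s1 + dx + 1, s2 + 2) 2 ++ ray (-1, 0) (s1 + dx + 1, s2) 1))) with hW4
  have w1 : IsWalk W1 (s1, s2) (s1 + dx, s2) := rayR_walk (s1, s2) dx
  have w2 : IsWalk W2 (s1, s2) (s1 + dx, s2) := by
    refine isWalk_append (walk_cast (rayU_walk (s1, s2) 1) ?_)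
      (isWalk_append (walk_cast (rayR_walk (s1, s2 + 1) dx) ?_)
        (walk_cast (rayD_walk (s1 + dx, s2 + 1) 1) ?_)) <;>
      (rw [Prod.mk.injEq]; push_cast; omega)
  have w3 : IsWalk W3 (s1, s2) (s1 + dx, s2) := by
    refine isWalk_append (walk_cast (rayD_walk (s1, s2) 1) ?_)
      (isWalk_append (walk_cast (rayR_walk (s1, s2 - 1) dx) ?_)
        (walk_cast (rayU_walk (s1 + dx, s2 - 1) 1) ?_)) <;>
      (rw [Prod.mk.injEq]; push_cast; omega)
  have w4 : IsWalk W4 (s1, s2) (s1 + dx, s2) := by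
    refine isWalk_append (walk_cast (rayL_walk (s1, s2) 1) ?_)
      (isWalk_append (walk_cast (rayU_walk (s1 - 1, s2) 2) ?_)
        (isWalk_append (walk_cast (rayR_walk (s1 - 1, s2 + 2) (dx + 2)) ?_)
          (isWalk_append (walk_cast (rayD_walk (s1 + dx + 1, s2 + 2) 2) ?_)
            (walk_cast (rayL_walk (s1 + dx + 1, s2) 1) ?_)))) <;>
      (rw [Prod.mk.injEq]; push_cast; omega)
  apply pick4 w1 w2 w3 w4 <;>
    first
    | assumption
    | (intro v hva hvb
       obtain ⟨v1, v2⟩ := v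
       simp only [hW1, hW2, hW3, hW4, mem_wverts_append, mem_rayR, mem_rayL, mem_rayU,
         mem_rayD] at hva hvb
       rw [Prod.mk.injEq, Prod.mk.injEq]
       push_cast at hva hvb ⊢
       omega)

/-! Symmetry transfers -/

def mapS (Φ : Pt → Pt) (L : List Stp) : List Stp := L.map (fun s => (Φ s.1, Φ s.2))

lemma map_walk {Φ : Pt → Pt} (hU : ∀ s : Stp, UStep s → UStep (Φ s.1, Φ s.2)) :
    ∀ {L : List Stp} {a b : Pt}, IsWalk L a b → IsWalk (mapS Φ L) (Φ a) (Φ b) := by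
  intro L
  induction L with
  | nil => intro a b h; cases h; exact rfl
  | cons s L ih =>
      intro a b h
      obtain ⟨h1, h2, h3⟩ := h
      exact ⟨by rw [← h1], hU s h2, ih h3⟩

lemma map_verts {Φ : Pt → Pt} {L : List Stp} {v : Pt} :
    v ∈ wverts (mapS Φ L) ↔ ∃ w ∈ wverts L, v = Φ w := by
  rw [mem_wverts]
  constructor
  · rintro ⟨s, hs, h⟩
    rw [mapS, List.mem_map] at hs
    obtain ⟨u, hu, rfl⟩ := hs
    rcases h with h | h
    · exact ⟨u.1, mem_wverts.mpr ⟨u, hu, Or.inl rfl⟩, h⟩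
    · exact ⟨u.2, mem_wverts.mpr ⟨u, hu, Or.inr rfl⟩, h⟩
  · rintro ⟨w, hw, rfl⟩
    rw [mem_wverts] at hw
    obtain ⟨u, hu, h⟩ := hw
    refine ⟨(Φ u.1, Φ u.2), ?_, ?_⟩
    · rw [mapS, List.mem_map]; exact ⟨u, hu, rfl⟩
    · rcases h with h | h
      · exact Or.inl (by rw [h])
      · exact Or.inr (by rw [h])

lemma good_map {Φ : Pt → Pt} (hU : ∀ s : Stp, UStep s → UStep (Φ s.1, Φ s.2))
    (hinj : Function.Injective Φ) {s t x y z : Pt} (h : good s t x y z) :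
    good (Φ s) (Φ t) (Φ x) (Φ y) (Φ z) := by
  obtain ⟨L, hL, hx, hy, hz⟩ := h
  refine ⟨mapS Φ L, map_walk hU hL, ?_, ?_, ?_⟩ <;>
    (intro hmem
     rw [map_verts] at hmem
     obtain ⟨w, hw, he⟩ := hmem
     first
       | exact hx (hinj he ▸ hw)
       | exact hy (hinj he ▸ hw)
       | exact hz (hinj he ▸ hw))

def mpx (p : Pt) : Pt := (-p.1, p.2)
def mpy (p : Pt) : Pt := (p.1, -p.2)
def mps (p : Pt) : Pt := (p.2, p.1)

lemma mpx_inj : Function.Injective mpx := by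
  intro p q h; unfold mpx at h; rw [Prod.mk.injEq] at h
  ext
  · omega
  · exact h.2

lemma mpy_inj : Function.Injective mpy := by
  intro p q h; unfold mpy at h; rw [Prod.mk.injEq] at h
  ext
  · exact h.1
  · omega

lemma mps_inj : Function.Injective mps := by
  intro p q h; unfold mps at h; rw [Prod.mk.injEq] at h
  ext
  · exact h.2
  · exact h.1

lemma mpx_ustep : ∀ s : Stp, UStep s → UStep (mpx s.1, mpx s.2) := by
  intro s h; unfold UStep mpx at *; dsimp only at *; omega

lemma mpy_ustep : ∀ s : Stp, UStep s → UStep (mpy s.1, mpy s.2) := by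
  intro s h; unfold UStep mpy at *; dsimp only at *; omega

lemma mps_ustep : ∀ s : Stp, UStep s → UStep (mps s.1, mps s.2) := by
  intro s h; unfold UStep mps at *; dsimp only at *; omega

@[simp] lemma mpx_mpx (p : Pt) : mpx (mpx p) = p := by unfold mpx; ext <;> dsimp <;> ring
@[simp] lemma mpy_mpy (p : Pt) : mpy (mpy p) = p := by unfold mpy; ext <;> dsimp <;> ring
@[simp] lemma mps_mps (p : Pt) : mps (mps p) = p := by unfold mps; ext <;> dsimp

/-! The main 3-point avoidance walk existence -/

lemma avoid3_posxy (s t x y z : Pt) (h1 : s.1 < t.1) (h2 : s.2 ≤ t.2)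
    (hx : x ≠ s) (hx' : x ≠ t) (hy : y ≠ s) (hy' : y ≠ t) (hz : z ≠ s) (hz' : z ≠ t) :
    good s t x y z := by
  obtain ⟨s1, s2⟩ := s
  obtain ⟨t1, t2⟩ := t
  dsimp only at h1 h2
  rcases eq_or_lt_of_le h2 with he | hlt
  · have e : ((t1 : ℤ), (t2 : ℤ)) = (s1 + ((t1 - s1).toNat : ℤ), s2) := by
      rw [Prod.mk.injEq]; omega
    rw [e] at hx' hy' hz' ⊢
    exact caseB s1 s2 (t1 - s1).toNat (by omega) x y z hx hx' hy hy' hz hz'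
  · have e : ((t1 : ℤ), (t2 : ℤ)) = (s1 + ((t1 - s1).toNat : ℤ), s2 + ((t2 - s2).toNat : ℤ)) := by
      rw [Prod.mk.injEq]; omega
    rw [e] at hx' hy' hz' ⊢
    exact caseA s1 s2 (t1 - s1).toNat (t2 - s2).toNat (by omega) (by omega) x y z
      hx hx' hy hy' hz hz'

lemma avoid3_posx (s t x y z : Pt) (h1 : s.1 < t.1)
    (hx : x ≠ s) (hx' : x ≠ t) (hy : y ≠ s) (hy' : y ≠ t) (hz : z ≠ s) (hz' : z ≠ t) :
    good s t x y z := by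
  by_cases h2 : s.2 ≤ t.2
  · exact avoid3_posxy s t x y z h1 h2 hx hx' hy hy' hz hz'
  · have h := avoid3_posxy (mpy s) (mpy t) (mpy x) (mpy y) (mpy z)
      (by unfold mpy; dsimp; omega) (by unfold mpy; dsimp; omega)
      (fun he => hx (mpy_inj he)) (fun he => hx' (mpy_inj he))
      (fun he => hy (mpy_inj he)) (fun he => hy' (mpy_inj he))
      (fun he => hz (mpy_inj he)) (fun he => hz' (mpy_inj he))
    have h' := good_map mpy_ustep mpy_inj h
    simpa using h'

lemma avoid3_nex (s t x y z : Pt) (h1 : s.1 ≠ t.1)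
    (hx : x ≠ s) (hx' : x ≠ t) (hy : y ≠ s) (hy' : y ≠ t) (hz : z ≠ s) (hz' : z ≠ t) :
    good s t x y z := by
  rcases lt_or_gt_of_ne h1 with h | h
  · exact avoid3_posx s t x y z h hx hx' hy hy' hz hz'
  · have hh := avoid3_posx (mpx s) (mpx t) (mpx x) (mpx y) (mpx z)
      (by unfold mpx; dsimp; omega)
      (fun he => hx (mpx_inj he)) (fun he => hx' (mpx_inj he))
      (fun he => hy (mpx_inj he)) (fun he => hy' (mpx_inj he))
      (fun he => hz (mpx_inj he)) (fun he => hz' (mpx_inj he))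
    have h' := good_map mpx_ustep mpx_inj hh
    simpa using h'

theorem avoid3 (s t x y z : Pt)
    (hx : x ≠ s) (hx' : x ≠ t) (hy : y ≠ s) (hy' : y ≠ t) (hz : z ≠ s) (hz' : z ≠ t) :
    good s t x y z := by
  by_cases hst : s = t
  · subst hst
    exact ⟨[], rfl, by simp [wverts], by simp [wverts], by simp [wverts]⟩
  by_cases h1 : s.1 = t.1
  · have h2 : s.2 ≠ t.2 := by
      intro h2; exact hst (Prod.ext h1 h2)
    have hh := avoid3_nex (mps s) (mps t) (mps x) (mps y) (mps z)
      (by unfold mps; dsimp; omega)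
      (fun he => hx (mps_inj he)) (fun he => hx' (mps_inj he))
      (fun he => hy (mps_inj he)) (fun he => hy' (mps_inj he))
      (fun he => hz (mps_inj he)) (fun he => hz' (mps_inj he))
    have h' := good_map mps_ustep mps_inj hh
    simpa using h'
  · exact avoid3_nex s t x y z h1 hx hx' hy hy' hz hz'

/-! The T invariant of a 4-point configuration -/

def Dconf (a b c d : Pt) : Prop :=
  a ≠ b ∧ a ≠ c ∧ a ≠ d ∧ b ≠ c ∧ b ≠ d ∧ c ≠ d

instance (a b c d : Pt) : Decidable (Dconf a b c d) := by unfold Dconf; infer_instance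

def VW (a b c d : Pt) (W1 W2 W3 : List Stp) : Prop :=
  (IsWalk W1 c d ∧ a ∉ wverts W1 ∧ b ∉ wverts W1) ∧
  (IsWalk W2 b d ∧ a ∉ wverts W2 ∧ c ∉ wverts W2) ∧
  (IsWalk W3 b c ∧ a ∉ wverts W3 ∧ d ∉ wverts W3)

lemma VW_exists {a b c d : Pt} (h : Dconf a b c d) : ∃ W1 W2 W3, VW a b c d W1 W2 W3 := by
  obtain ⟨h1, h2, h3, h4, h5, h6⟩ := h
  obtain ⟨W1, hW1, p1, p2, _⟩ := avoid3 c d a b b h2 h3 h4 h5 h4 h5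
  obtain ⟨W2, hW2, q1, q2, _⟩ := avoid3 b d a c a h1 h3 (Ne.symm h4) h6 h1 h3
  obtain ⟨W3, hW3, r1, r2, _⟩ := avoid3 b c a d a h1 h2 (Ne.symm h5) (Ne.symm h6) h1 h2
  exact ⟨W1, W2, W3, ⟨hW1, p1, p2⟩, ⟨hW2, q1, q2⟩, ⟨hW3, r1, r2⟩⟩

noncomputable def Tsum (a b c d : Pt) (W1 W2 W3 : List Stp) : ZMod 2 :=
  lk a W1 + lk b W1 + (lk a W2 + lk c W2) + (lk a W3 + lk d W3)

noncomputable def Tf (a b c d : Pt) : ZMod 2 :=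
  if h : Dconf a b c d then
    Tsum a b c d (VW_exists h).choose (VW_exists h).choose_spec.choose
      (VW_exists h).choose_spec.choose_spec.choose
  else 0

lemma Tf_spec {a b c d : Pt} {W1 W2 W3 : List Stp} (h : Dconf a b c d)
    (hv : VW a b c d W1 W2 W3) : Tf a b c d = Tsum a b c d W1 W2 W3 := by
  rw [Tf, dif_pos h]
  obtain ⟨⟨u1, ua1, ub1⟩, ⟨u2, ua2, uc2⟩, ⟨u3, ua3, ud3⟩⟩ :=
    (VW_exists h).choose_spec.choose_spec.choose_spec
  obtain ⟨⟨v1, va1, vb1⟩, ⟨v2, va2, vc2⟩, ⟨v3, va3, vd3⟩⟩ := hv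
  unfold Tsum
  rw [lk_indep u1 v1 ua1 va1, lk_indep u1 v1 ub1 vb1,
    lk_indep u2 v2 ua2 va2, lk_indep u2 v2 uc2 vc2,
    lk_indep u3 v3 ua3 va3, lk_indep u3 v3 ud3 vd3]

lemma wverts_single (p q : Pt) : wverts [(p, q)] = [p, q] := rfl

lemma mem_wverts_single {p q v : Pt} : v ∈ wverts [(p, q)] ↔ v = p ∨ v = q := by
  rw [wverts_single]; simp

lemma zsolve1 (T u v w : ZMod 2) : T + ((u + v) + (u + w) + (v + w)) = T := by
  revert T u v w; decide

/-! Move lemmas -/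

lemma Tf_move_a {a a' b c d : Pt} (h : Dconf a b c d) (h' : Dconf a' b c d)
    (hst : UStep (a, a')) : Tf a b c d = Tf a' b c d := by
  obtain ⟨h1, h2, h3, h4, h5, h6⟩ := h
  obtain ⟨g1, g2, g3, g4, g5, g6⟩ := h'
  obtain ⟨W1, hW1, p1, p2, p3⟩ := avoid3 c d a b a' h2 h3 h4 h5 g2 g3
  obtain ⟨W2, hW2, q1, q2, q3⟩ := avoid3 b d a c a' h1 h3 (Ne.symm h4) h6 g1 g3
  obtain ⟨W3, hW3, r1, r2, r3⟩ := avoid3 b c a d a' h1 h2 (Ne.symm h5) (Ne.symm h6) g1 g2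
  have he : IsWalk [(a, a')] a a' := isWalk_single hst
  have hdisj1 : ∀ v ∈ wverts W1, v ∉ wverts [(a, a')] := by
    intro v hv hm
    rcases mem_wverts_single.mp hm with rfl | rfl
    · exact p1 hv
    · exact p3 hv
  have hdisj2 : ∀ v ∈ wverts W2, v ∉ wverts [(a, a')] := by
    intro v hv hm
    rcases mem_wverts_single.mp hm with rfl | rfl
    · exact q1 hv
    · exact q3 hv
  have hdisj3 : ∀ v ∈ wverts W3, v ∉ wverts [(a, a')] := by
    intro v hv hm
    rcases mem_wverts_single.mp hm with rfl | rfl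
    · exact r1 hv
    · exact r3 hv
  have e1 : lk a W1 + lk a' W1 = lk c [(a, a')] + lk d [(a, a')] := recip he hW1 hdisj1
  have e2 : lk a W2 + lk a' W2 = lk b [(a, a')] + lk d [(a, a')] := recip he hW2 hdisj2
  have e3 : lk a W3 + lk a' W3 = lk b [(a, a')] + lk c [(a, a')] := recip he hW3 hdisj3
  rw [Tf_spec ⟨h1, h2, h3, h4, h5, h6⟩ ⟨⟨hW1, p1, p2⟩, ⟨hW2, q1, q2⟩, ⟨hW3, r1, r2⟩⟩,
    Tf_spec ⟨g1, g2, g3, g4, g5, g6⟩ ⟨⟨hW1, p3, p2⟩, ⟨hW2, q3, q2⟩, ⟨hW3, r3, r2⟩⟩]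
  unfold Tsum
  linear_combination e1 + e2 + e3 - z2_self (lk a' W1) - z2_self (lk a' W2) -
    z2_self (lk a' W3) + z2_self (lk b [(a, a')]) + z2_self (lk c [(a, a')]) +
    z2_self (lk d [(a, a')])

lemma Tf_move_b {a b b' c d : Pt} (h : Dconf a b c d) (h' : Dconf a b' c d)
    (hst : UStep (b, b')) : Tf a b c d = Tf a b' c d := by
  obtain ⟨h1, h2, h3, h4, h5, h6⟩ := h
  obtain ⟨g1, g2, g3, g4, g5, g6⟩ := h'
  obtain ⟨W1, hW1, p1, p2, p3⟩ := avoid3 c d a b b' h2 h3 h4 h5 g4 g5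
  obtain ⟨W2, hW2, q1, q2, _⟩ := avoid3 b d a c a h1 h3 (Ne.symm h4) h6 h1 h3
  obtain ⟨W3, hW3, r1, r2, _⟩ := avoid3 b c a d a h1 h2 (Ne.symm h5) (Ne.symm h6) h1 h2
  have he : IsWalk [(b, b')] b b' := isWalk_single hst
  have he' : IsWalk [(b', b)] b' b := isWalk_single (ustep_symm hst)
  have hdisj1 : ∀ v ∈ wverts W1, v ∉ wverts [(b, b')] := by
    intro v hv hm
    rcases mem_wverts_single.mp hm with rfl | rfl
    · exact p2 hv
    · exact p3 hv
  have e1 : lk b W1 + lk b' W1 = lk c [(b, b')] + lk d [(b, b')] := recip he hW1 hdisj1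
  have hW2' : IsWalk ([(b', b)] ++ W2) b' d := isWalk_append he' hW2
  have hW3' : IsWalk ([(b', b)] ++ W3) b' c := isWalk_append he' hW3
  have hmem : ∀ w : Pt, w ≠ b' → w ≠ b → ∀ (W : List Stp), w ∉ wverts W →
      w ∉ wverts ([(b', b)] ++ W) := by
    intro w hw1 hw2 W hW hm
    rw [mem_wverts_append] at hm
    rcases hm with hm | hm
    · rcases mem_wverts_single.mp hm with rfl | rfl
      · exact hw1 rfl
      · exact hw2 rfl
    · exact hW hm
  have na2 := hmem a g1 h1 W2 q1
  have nc2 := hmem c (Ne.symm g4) (Ne.symm h4) W2 q2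
  have na3 := hmem a g1 h1 W3 r1
  have nd3 := hmem d (Ne.symm g5) (Ne.symm h5) W3 r2
  rw [Tf_spec ⟨h1, h2, h3, h4, h5, h6⟩ ⟨⟨hW1, p1, p2⟩, ⟨hW2, q1, q2⟩, ⟨hW3, r1, r2⟩⟩,
    Tf_spec ⟨g1, g2, g3, g4, g5, g6⟩ ⟨⟨hW1, p1, p3⟩, ⟨hW2', na2, nc2⟩, ⟨hW3', na3, nd3⟩⟩]
  have hrevE : ∀ o : Pt, lk o [(b', b)] = lk o [(b, b')] := by
    intro o
    have : ([(b', b)] : List Stp) = rev [(b, b')] := rfl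
    rw [this, lk_rev]
  unfold Tsum
  rw [lk_append, lk_append, lk_append, lk_append, hrevE a, hrevE c, hrevE d]
  linear_combination e1 - z2_self (lk b' W1) - z2_self (lk a [(b, b')])

lemma Tf_move_c {a b c c' d : Pt} (h : Dconf a b c d) (h' : Dconf a b c' d)
    (hst : UStep (c, c')) : Tf a b c d = Tf a b c' d := by
  obtain ⟨h1, h2, h3, h4, h5, h6⟩ := h
  obtain ⟨g1, g2, g3, g4, g5, g6⟩ := h'
  obtain ⟨W1, hW1, p1, p2, _⟩ := avoid3 c d a b a h2 h3 h4 h5 h2 h3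
  obtain ⟨W2, hW2, q1, q2, q3⟩ := avoid3 b d a c c' h1 h3 (Ne.symm h4) h6 (Ne.symm g4) g6
  obtain ⟨W3, hW3, r1, r2, _⟩ := avoid3 b c a d a h1 h2 (Ne.symm h5) (Ne.symm h6) h1 h2
  have he : IsWalk [(c, c')] c c' := isWalk_single hst
  have he' : IsWalk [(c', c)] c' c := isWalk_single (ustep_symm hst)
  have hdisj2 : ∀ v ∈ wverts W2, v ∉ wverts [(c, c')] := by
    intro v hv hm
    rcases mem_wverts_single.mp hm with rfl | rfl
    · exact q2 hv
    · exact q3 hv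
  have e2 : lk c W2 + lk c' W2 = lk b [(c, c')] + lk d [(c, c')] := recip he hW2 hdisj2
  have hW1' : IsWalk ([(c', c)] ++ W1) c' d := isWalk_append he' hW1
  have hW3' : IsWalk (W3 ++ [(c, c')]) b c' := isWalk_append hW3 he
  have hmemp : ∀ w : Pt, w ≠ c' → w ≠ c → ∀ (W : List Stp), w ∉ wverts W →
      w ∉ wverts ([(c', c)] ++ W) := by
    intro w hw1 hw2 W hW hm
    rw [mem_wverts_append] at hm
    rcases hm with hm | hm
    · rcases mem_wverts_single.mp hm with rfl | rfl
      · exact hw1 rfl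
      · exact hw2 rfl
    · exact hW hm
  have hmems : ∀ w : Pt, w ≠ c → w ≠ c' → ∀ (W : List Stp), w ∉ wverts W →
      w ∉ wverts (W ++ [(c, c')]) := by
    intro w hw1 hw2 W hW hm
    rw [mem_wverts_append] at hm
    rcases hm with hm | hm
    · exact hW hm
    · rcases mem_wverts_single.mp hm with rfl | rfl
      · exact hw1 rfl
      · exact hw2 rfl
  have na1 := hmemp a g2 h2 W1 p1
  have nb1 := hmemp b g4 h4 W1 p2
  have na3 := hmems a h2 g2 W3 r1
  have nd3 := hmems d (fun hh => h6 hh.symm) (fun hh => g6 hh.symm) W3 r2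
  rw [Tf_spec ⟨h1, h2, h3, h4, h5, h6⟩ ⟨⟨hW1, p1, p2⟩, ⟨hW2, q1, q2⟩, ⟨hW3, r1, r2⟩⟩,
    Tf_spec ⟨g1, g2, g3, g4, g5, g6⟩ ⟨⟨hW1', na1, nb1⟩, ⟨hW2, q1, q3⟩, ⟨hW3', na3, nd3⟩⟩]
  have hrevE : ∀ o : Pt, lk o [(c', c)] = lk o [(c, c')] := by
    intro o
    have : ([(c', c)] : List Stp) = rev [(c, c')] := rfl
    rw [this, lk_rev]
  unfold Tsum
  rw [lk_append, lk_append, lk_append, lk_append, hrevE a, hrevE b]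
  linear_combination e2 - z2_self (lk a [(c, c')]) - z2_self (lk c' W2)

lemma Tf_move_d {a b c d d' : Pt} (h : Dconf a b c d) (h' : Dconf a b c d')
    (hst : UStep (d, d')) : Tf a b c d = Tf a b c d' := by
  obtain ⟨h1, h2, h3, h4, h5, h6⟩ := h
  obtain ⟨g1, g2, g3, g4, g5, g6⟩ := h'
  obtain ⟨W1, hW1, p1, p2, _⟩ := avoid3 c d a b a h2 h3 h4 h5 h2 h3
  obtain ⟨W2, hW2, q1, q2, _⟩ := avoid3 b d a c a h1 h3 (Ne.symm h4) h6 h1 h3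
  obtain ⟨W3, hW3, r1, r2, r3⟩ := avoid3 b c a d d' h1 h2 (Ne.symm h5) (Ne.symm h6)
    (Ne.symm g5) (Ne.symm g6)
  have he : IsWalk [(d, d')] d d' := isWalk_single hst
  have hdisj3 : ∀ v ∈ wverts W3, v ∉ wverts [(d, d')] := by
    intro v hv hm
    rcases mem_wverts_single.mp hm with rfl | rfl
    · exact r2 hv
    · exact r3 hv
  have e3 : lk d W3 + lk d' W3 = lk b [(d, d')] + lk c [(d, d')] := recip he hW3 hdisj3
  have hW1' : IsWalk (W1 ++ [(d, d')]) c d' := isWalk_append hW1 he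
  have hW2' : IsWalk (W2 ++ [(d, d')]) b d' := isWalk_append hW2 he
  have hmems : ∀ w : Pt, w ≠ d → w ≠ d' → ∀ (W : List Stp), w ∉ wverts W →
      w ∉ wverts (W ++ [(d, d')]) := by
    intro w hw1 hw2 W hW hm
    rw [mem_wverts_append] at hm
    rcases hm with hm | hm
    · exact hW hm
    · rcases mem_wverts_single.mp hm with rfl | rfl
      · exact hw1 rfl
      · exact hw2 rfl
  have na1 := hmems a h3 g3 W1 p1
  have nb1 := hmems b h5 g5 W1 p2
  have na2 := hmems a h3 g3 W2 q1
  have nc2 := hmems c h6 g6 W2 q2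
  rw [Tf_spec ⟨h1, h2, h3, h4, h5, h6⟩ ⟨⟨hW1, p1, p2⟩, ⟨hW2, q1, q2⟩, ⟨hW3, r1, r2⟩⟩,
    Tf_spec ⟨g1, g2, g3, g4, g5, g6⟩ ⟨⟨hW1', na1, nb1⟩, ⟨hW2', na2, nc2⟩, ⟨hW3, r1, r3⟩⟩]
  unfold Tsum
  rw [lk_append, lk_append, lk_append, lk_append]
  linear_combination e3 - z2_self (lk a [(d, d')]) - z2_self (lk d' W3)

/-! Walk-move lemmas -/

lemma Tf_wmove_a : ∀ {L : List Stp} {a a' b c d : Pt}, IsWalk L a a' →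
    (∀ v ∈ wverts L, v ≠ b ∧ v ≠ c ∧ v ≠ d) → Dconf a b c d → Tf a b c d = Tf a' b c d := by
  intro L
  induction L with
  | nil => intro a a' b c d hL _ _; cases hL; rfl
  | cons s M ih =>
      intro a a' b c d hL hav h
      obtain ⟨h1, h2, h3⟩ := hL
      obtain ⟨n1, n2, n3⟩ := hav s.2 (mem_wverts_cons.mpr (Or.inr (Or.inl rfl)))
      have hmid : Dconf s.2 b c d := ⟨n1, n2, n3, h.2.2.2.1, h.2.2.2.2.1, h.2.2.2.2.2⟩
      have hstep : UStep (a, s.2) := by rw [← h1]; exact h2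
      rw [Tf_move_a h hmid hstep]
      exact ih h3 (fun v hv => hav v (mem_wverts_cons.mpr (Or.inr (Or.inr hv)))) hmid

lemma Tf_wmove_b : ∀ {L : List Stp} {a b b' c d : Pt}, IsWalk L b b' →
    (∀ v ∈ wverts L, v ≠ a ∧ v ≠ c ∧ v ≠ d) → Dconf a b c d → Tf a b c d = Tf a b' c d := by
  intro L
  induction L with
  | nil => intro a b b' c d hL _ _; cases hL; rfl
  | cons s M ih =>
      intro a b b' c d hL hav h
      obtain ⟨h1, h2, h3⟩ := hL
      obtain ⟨n1, n2, n3⟩ := hav s.2 (mem_wverts_cons.mpr (Or.inr (Or.inl rfl)))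
      have hmid : Dconf a s.2 c d := ⟨Ne.symm n1, h.2.1, h.2.2.1, n2, n3, h.2.2.2.2.2⟩
      have hstep : UStep (b, s.2) := by rw [← h1]; exact h2
      rw [Tf_move_b h hmid hstep]
      exact ih h3 (fun v hv => hav v (mem_wverts_cons.mpr (Or.inr (Or.inr hv)))) hmid

lemma Tf_wmove_c : ∀ {L : List Stp} {a b c c' d : Pt}, IsWalk L c c' →
    (∀ v ∈ wverts L, v ≠ a ∧ v ≠ b ∧ v ≠ d) → Dconf a b c d → Tf a b c d = Tf a b c' d := by
  intro L
  induction L with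
  | nil => intro a b c c' d hL _ _; cases hL; rfl
  | cons s M ih =>
      intro a b c c' d hL hav h
      obtain ⟨h1, h2, h3⟩ := hL
      obtain ⟨n1, n2, n3⟩ := hav s.2 (mem_wverts_cons.mpr (Or.inr (Or.inl rfl)))
      have hmid : Dconf a b s.2 d := ⟨h.1, Ne.symm n1, h.2.2.1, Ne.symm n2, h.2.2.2.2.1, n3⟩
      have hstep : UStep (c, s.2) := by rw [← h1]; exact h2
      rw [Tf_move_c h hmid hstep]
      exact ih h3 (fun v hv => hav v (mem_wverts_cons.mpr (Or.inr (Or.inr hv)))) hmid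

lemma Tf_wmove_d : ∀ {L : List Stp} {a b c d d' : Pt}, IsWalk L d d' →
    (∀ v ∈ wverts L, v ≠ a ∧ v ≠ b ∧ v ≠ c) → Dconf a b c d → Tf a b c d = Tf a b c d' := by
  intro L
  induction L with
  | nil => intro a b c d d' hL _ _; cases hL; rfl
  | cons s M ih =>
      intro a b c d d' hL hav h
      obtain ⟨h1, h2, h3⟩ := hL
      obtain ⟨n1, n2, n3⟩ := hav s.2 (mem_wverts_cons.mpr (Or.inr (Or.inl rfl)))
      have hmid : Dconf a b c s.2 := ⟨h.1, h.2.1, Ne.symm n1, h.2.2.2.1, Ne.symm n2, Ne.symm n3⟩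
      have hstep : UStep (d, s.2) := by rw [← h1]; exact h2
      rw [Tf_move_d h hmid hstep]
      exact ih h3 (fun v hv => hav v (mem_wverts_cons.mpr (Or.inr (Or.inr hv)))) hmid

/-! Transport to a canonical configuration -/

lemma good_move {s t x y z : Pt} (h : good s t x y z) :
    ∃ L, IsWalk L s t ∧ ∀ v ∈ wverts L, v ≠ x ∧ v ≠ y ∧ v ≠ z := by
  obtain ⟨L, hL, nx, ny, nz⟩ := h
  refine ⟨L, hL, fun v hv => ⟨?_, ?_, ?_⟩⟩ <;> (rintro rfl; first | exact nx hv | exact ny hv | exact nz hv)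

lemma nex {p q : Pt} (h : p.1 ≠ q.1) : p ≠ q := fun he => h (by rw [he])
lemma ney {p q : Pt} (h : p.2 ≠ q.2) : p ≠ q := fun he => h (by rw [he])

lemma Tf_const {a b c d : Pt} (h : Dconf a b c d) :
    Tf a b c d = Tf ((0 : ℤ), (0 : ℤ)) ((1 : ℤ), (0 : ℤ)) ((2 : ℤ), (0 : ℤ)) ((3 : ℤ), (0 : ℤ)) := by
  obtain ⟨h1, h2, h3, h4, h5, h6⟩ := h
  obtain ⟨Y, hya, hyb, hyc, hyd⟩ : ∃ Y : ℤ, a.2 < Y ∧ b.2 < Y ∧ c.2 < Y ∧ d.2 < Y :=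
    ⟨(a.2.natAbs : ℤ) + b.2.natAbs + c.2.natAbs + d.2.natAbs + 1, by omega⟩
  set A : Pt := ((0 : ℤ), Y) with hA
  set B : Pt := ((1 : ℤ), Y) with hB
  set C : Pt := ((2 : ℤ), Y) with hC
  set D : Pt := ((3 : ℤ), Y) with hD
  set A' : Pt := ((0 : ℤ), (0 : ℤ)) with hA'
  set B' : Pt := ((1 : ℤ), (0 : ℤ)) with hB'
  set C' : Pt := ((2 : ℤ), (0 : ℤ)) with hC'
  set D' : Pt := ((3 : ℤ), (0 : ℤ)) with hD'
  have eA1 : A.1 = 0 := rfl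
  have eA2 : A.2 = Y := rfl
  have eB1 : B.1 = 1 := rfl
  have eB2 : B.2 = Y := rfl
  have eC1 : C.1 = 2 := rfl
  have eC2 : C.2 = Y := rfl
  have eD1 : D.1 = 3 := rfl
  have eD2 : D.2 = Y := rfl
  have fA1 : A'.1 = 0 := rfl
  have fA2 : A'.2 = 0 := rfl
  have fB1 : B'.1 = 1 := rfl
  have fB2 : B'.2 = 0 := rfl
  have fC1 : C'.1 = 2 := rfl
  have fC2 : C'.2 = 0 := rfl
  have fD1 : D'.1 = 3 := rfl
  have fD2 : D'.2 = 0 := rfl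
  -- stage 1 : a → A
  have d1 : Dconf a b c d := ⟨h1, h2, h3, h4, h5, h6⟩
  obtain ⟨L1, w1, av1⟩ := good_move (avoid3 a A b c d (Ne.symm h1) (ney (by omega)) (Ne.symm h2)
    (ney (by omega)) (Ne.symm h3) (ney (by omega)))
  have d2 : Dconf A b c d := ⟨ney (by omega), ney (by omega), ney (by omega), h4, h5, h6⟩
  have s1 : Tf a b c d = Tf A b c d := Tf_wmove_a w1 av1 d1
  -- stage 2 : b → B
  obtain ⟨L2, w2, av2⟩ := good_move (avoid3 b B A c d (ney (by omega)) (nex (by omega))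
    (Ne.symm h4) (ney (by omega)) (Ne.symm h5) (ney (by omega)))
  have d3 : Dconf A B c d := ⟨nex (by omega), ney (by omega), ney (by omega),
    ney (by omega), ney (by omega), h6⟩
  have s2 : Tf A b c d = Tf A B c d := Tf_wmove_b w2 av2 d2
  -- stage 3 : c → C
  obtain ⟨L3, w3, av3⟩ := good_move (avoid3 c C A B d (ney (by omega)) (nex (by omega))
    (ney (by omega)) (nex (by omega)) (Ne.symm h6) (ney (by omega)))
  have d4 : Dconf A B C d := ⟨nex (by omega), nex (by omega), ney (by omega),
    nex (by omega), ney (by omega), ney (by omega)⟩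
  have s3 : Tf A B c d = Tf A B C d := Tf_wmove_c w3 av3 d3
  -- stage 4 : d → D
  obtain ⟨L4, w4, av4⟩ := good_move (avoid3 d D A B C (ney (by omega)) (nex (by omega))
    (ney (by omega)) (nex (by omega)) (ney (by omega)) (nex (by omega)))
  have d5 : Dconf A B C D := ⟨nex (by omega), nex (by omega), nex (by omega),
    nex (by omega), nex (by omega), nex (by omega)⟩
  have s4 : Tf A B C d = Tf A B C D := Tf_wmove_d w4 av4 d4
  -- stage 5 : A → A'
  obtain ⟨L5, w5, av5⟩ := good_move (avoid3 A A' B C D (nex (by omega)) (nex (by omega))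
    (nex (by omega)) (nex (by omega)) (nex (by omega)) (nex (by omega)))
  have d6 : Dconf A' B C D := ⟨nex (by omega), nex (by omega), nex (by omega),
    nex (by omega), nex (by omega), nex (by omega)⟩
  have s5 : Tf A B C D = Tf A' B C D := Tf_wmove_a w5 av5 d5
  -- stage 6 : B → B'
  obtain ⟨L6, w6, av6⟩ := good_move (avoid3 B B' A' C D (nex (by omega)) (nex (by omega))
    (nex (by omega)) (nex (by omega)) (nex (by omega)) (nex (by omega)))
  have d7 : Dconf A' B' C D := ⟨nex (by omega), nex (by omega), nex (by omega),
    nex (by omega), nex (by omega), nex (by omega)⟩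
  have s6 : Tf A' B C D = Tf A' B' C D := Tf_wmove_b w6 av6 d6
  -- stage 7 : C → C'
  obtain ⟨L7, w7, av7⟩ := good_move (avoid3 C C' A' B' D (nex (by omega)) (nex (by omega))
    (nex (by omega)) (nex (by omega)) (nex (by omega)) (nex (by omega)))
  have d8 : Dconf A' B' C' D := ⟨nex (by omega), nex (by omega), nex (by omega),
    nex (by omega), nex (by omega), nex (by omega)⟩
  have s7 : Tf A' B' C D = Tf A' B' C' D := Tf_wmove_c w7 av7 d7
  -- stage 8 : D → D'
  obtain ⟨L8, w8, av8⟩ := good_move (avoid3 D D' A' B' C' (nex (by omega)) (nex (by omega))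
    (nex (by omega)) (nex (by omega)) (nex (by omega)) (nex (by omega)))
  have s8 : Tf A' B' C' D = Tf A' B' C' D' := Tf_wmove_d w8 av8 d8
  rw [s1, s2, s3, s4, s5, s6, s7, s8]

/-! The canonical configuration has T = 1 -/

lemma Tf_canon :
    Tf ((0 : ℤ), (0 : ℤ)) ((1 : ℤ), (0 : ℤ)) ((2 : ℤ), (0 : ℤ)) ((3 : ℤ), (0 : ℤ)) = 1 := by
  have h : Dconf ((0 : ℤ), (0 : ℤ)) ((1 : ℤ), (0 : ℤ)) ((2 : ℤ), (0 : ℤ)) ((3 : ℤ), (0 : ℤ)) := by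
    decide
  have hv : VW ((0 : ℤ), (0 : ℤ)) ((1 : ℤ), (0 : ℤ)) ((2 : ℤ), (0 : ℤ)) ((3 : ℤ), (0 : ℤ))
      [(((2 : ℤ), (0 : ℤ)), ((3 : ℤ), (0 : ℤ)))]
      [(((1 : ℤ), (0 : ℤ)), ((1 : ℤ), (1 : ℤ))), (((1 : ℤ), (1 : ℤ)), ((2 : ℤ), (1 : ℤ))),
        (((2 : ℤ), (1 : ℤ)), ((3 : ℤ), (1 : ℤ))), (((3 : ℤ), (1 : ℤ)), ((3 : ℤ), (0 : ℤ)))]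
      [(((1 : ℤ), (0 : ℤ)), ((2 : ℤ), (0 : ℤ)))] := by
    refine ⟨⟨⟨rfl, by decide, rfl⟩, by decide, by decide⟩,
      ⟨⟨rfl, by decide, rfl, by decide, rfl, by decide, rfl, by decide, rfl⟩, by decide, by decide⟩,
      ⟨⟨rfl, by decide, rfl⟩, by decide, by decide⟩⟩
  rw [Tf_spec h hv]
  decide

lemma Tf_one {a b c d : Pt} (h : Dconf a b c d) : Tf a b c d = 1 :=
  (Tf_const h).trans Tf_canon

/-! No K₅ minor model in the grid ℤ² -/

def SConn (S : Set Pt) : Prop :=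
  S.Nonempty ∧ ∀ u ∈ S, ∀ v ∈ S, ∃ L, IsWalk L u v ∧ ∀ z ∈ wverts L, z ∈ S

def SAdj (S T : Set Pt) : Prop := ∃ p ∈ S, ∃ q ∈ T, UStep (p, q)

theorem no5 (B : Fin 5 → Set Pt) (hc : ∀ i, SConn (B i))
    (hd : ∀ i j, i ≠ j → ∀ p, p ∈ B i → p ∉ B j)
    (ha : ∀ i j, i ≠ j → SAdj (B i) (B j)) : False := by
  classical
  -- hub points
  have hcmem : ∀ i, (hc i).1.choose ∈ B i := fun i => (hc i).1.choose_spec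
  set c : Fin 5 → Pt := fun i => (hc i).1.choose with hcdef
  -- arcs
  have arc : ∀ i j : Fin 5, i ≠ j → ∃ L, IsWalk L (c i) (c j) ∧
      ∀ z ∈ wverts L, z ∈ B i ∪ B j := by
    intro i j hij
    obtain ⟨p, hp, q, hq, hpq⟩ := ha i j hij
    obtain ⟨L1, w1, m1⟩ := (hc i).2 (c i) (hcmem i) p hp
    obtain ⟨L2, w2, m2⟩ := (hc j).2 q hq (c j) (hcmem j)
    refine ⟨L1 ++ ([(p, q)] ++ L2), isWalk_append w1 (isWalk_append (isWalk_single hpq) w2), ?_⟩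
    intro z hz
    rw [mem_wverts_append, mem_wverts_append] at hz
    rcases hz with hz | hz | hz
    · exact Or.inl (m1 z hz)
    · rcases mem_wverts_single.mp hz with rfl | rfl
      · exact Or.inl hp
      · exact Or.inr hq
    · exact Or.inr (m2 z hz)
  obtain ⟨W01, w01, m01⟩ := arc 0 1 (by decide)
  obtain ⟨W02, w02, m02⟩ := arc 0 2 (by decide)
  obtain ⟨W03, w03, m03⟩ := arc 0 3 (by decide)
  obtain ⟨W12, w12, m12⟩ := arc 1 2 (by decide)
  obtain ⟨W13, w13, m13⟩ := arc 1 3 (by decide)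
  obtain ⟨W23, w23, m23⟩ := arc 2 3 (by decide)
  obtain ⟨A04, a04, n04⟩ := arc 0 4 (by decide)
  obtain ⟨A14, a14, n14⟩ := arc 1 4 (by decide)
  obtain ⟨A24, a24, n24⟩ := arc 2 4 (by decide)
  obtain ⟨A34, a34, n34⟩ := arc 3 4 (by decide)
  -- cycles
  set C0 : List Stp := W12 ++ (W23 ++ rev W13) with hC0
  set C1 : List Stp := W02 ++ (W23 ++ rev W03) with hC1
  set C2 : List Stp := W01 ++ (W13 ++ rev W03) with hC2
  set C3 : List Stp := W01 ++ (W12 ++ rev W02) with hC3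
  have z0 : IsWalk C0 (c 1) (c 1) :=
    isWalk_append w12 (isWalk_append w23 (isWalk_rev w13))
  have z1 : IsWalk C1 (c 0) (c 0) :=
    isWalk_append w02 (isWalk_append w23 (isWalk_rev w03))
  have z2 : IsWalk C2 (c 0) (c 0) :=
    isWalk_append w01 (isWalk_append w13 (isWalk_rev w03))
  have z3 : IsWalk C3 (c 0) (c 0) :=
    isWalk_append w01 (isWalk_append w12 (isWalk_rev w02))
  -- vertex locations of cycles
  have mc0 : ∀ z ∈ wverts C0, z ∈ B 1 ∪ B 2 ∪ B 3 := by
    intro z hz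
    rw [hC0, mem_wverts_append, mem_wverts_append, mem_wverts_rev] at hz
    rcases hz with hz | hz | hz
    · rcases m12 z hz with h | h
      · exact Or.inl (Or.inl h)
      · exact Or.inl (Or.inr h)
    · rcases m23 z hz with h | h
      · exact Or.inl (Or.inr h)
      · exact Or.inr h
    · rcases m13 z hz with h | h
      · exact Or.inl (Or.inl h)
      · exact Or.inr h
  have mc1 : ∀ z ∈ wverts C1, z ∈ B 0 ∪ B 2 ∪ B 3 := by
    intro z hz
    rw [hC1, mem_wverts_append, mem_wverts_append, mem_wverts_rev] at hz
    rcases hz with hz | hz | hz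
    · rcases m02 z hz with h | h
      · exact Or.inl (Or.inl h)
      · exact Or.inl (Or.inr h)
    · rcases m23 z hz with h | h
      · exact Or.inl (Or.inr h)
      · exact Or.inr h
    · rcases m03 z hz with h | h
      · exact Or.inl (Or.inl h)
      · exact Or.inr h
  have mc2 : ∀ z ∈ wverts C2, z ∈ B 0 ∪ B 1 ∪ B 3 := by
    intro z hz
    rw [hC2, mem_wverts_append, mem_wverts_append, mem_wverts_rev] at hz
    rcases hz with hz | hz | hz
    · rcases m01 z hz with h | h
      · exact Or.inl (Or.inl h)
      · exact Or.inl (Or.inr h)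
    · rcases m13 z hz with h | h
      · exact Or.inl (Or.inr h)
      · exact Or.inr h
    · rcases m03 z hz with h | h
      · exact Or.inl (Or.inl h)
      · exact Or.inr h
  have mc3 : ∀ z ∈ wverts C3, z ∈ B 0 ∪ B 1 ∪ B 2 := by
    intro z hz
    rw [hC3, mem_wverts_append, mem_wverts_append, mem_wverts_rev] at hz
    rcases hz with hz | hz | hz
    · rcases m01 z hz with h | h
      · exact Or.inl (Or.inl h)
      · exact Or.inl (Or.inr h)
    · rcases m12 z hz with h | h
      · exact Or.inl (Or.inr h)
      · exact Or.inr h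
    · rcases m02 z hz with h | h
      · exact Or.inl (Or.inl h)
      · exact Or.inr h
  -- (α) : constancy towards the fifth branch set
  have const0 : σw C0 (c 0) = σw C0 (c 4) := by
    refine const_walk z0 a04 ?_
    intro v hv hvC
    rcases n04 v hv with h | h
    · rcases mc0 v hvC with (hh | hh) | hh
      · exact hd 1 0 (by decide) v hh h
      · exact hd 2 0 (by decide) v hh h
      · exact hd 3 0 (by decide) v hh h
    · rcases mc0 v hvC with (hh | hh) | hh
      · exact hd 1 4 (by decide) v hh h
      · exact hd 2 4 (by decide) v hh h
      · exact hd 3 4 (by decide) v hh h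
  have const1 : σw C1 (c 1) = σw C1 (c 4) := by
    refine const_walk z1 a14 ?_
    intro v hv hvC
    rcases n14 v hv with h | h
    · rcases mc1 v hvC with (hh | hh) | hh
      · exact hd 0 1 (by decide) v hh h
      · exact hd 2 1 (by decide) v hh h
      · exact hd 3 1 (by decide) v hh h
    · rcases mc1 v hvC with (hh | hh) | hh
      · exact hd 0 4 (by decide) v hh h
      · exact hd 2 4 (by decide) v hh h
      · exact hd 3 4 (by decide) v hh h
  have const2 : σw C2 (c 2) = σw C2 (c 4) := by
    refine const_walk z2 a24 ?_
    intro v hv hvC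
    rcases n24 v hv with h | h
    · rcases mc2 v hvC with (hh | hh) | hh
      · exact hd 0 2 (by decide) v hh h
      · exact hd 1 2 (by decide) v hh h
      · exact hd 3 2 (by decide) v hh h
    · rcases mc2 v hvC with (hh | hh) | hh
      · exact hd 0 4 (by decide) v hh h
      · exact hd 1 4 (by decide) v hh h
      · exact hd 3 4 (by decide) v hh h
  have const3 : σw C3 (c 3) = σw C3 (c 4) := by
    refine const_walk z3 a34 ?_
    intro v hv hvC
    rcases n34 v hv with h | h
    · rcases mc3 v hvC with (hh | hh) | hh
      · exact hd 0 3 (by decide) v hh h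
      · exact hd 1 3 (by decide) v hh h
      · exact hd 2 3 (by decide) v hh h
    · rcases mc3 v hvC with (hh | hh) | hh
      · exact hd 0 4 (by decide) v hh h
      · exact hd 1 4 (by decide) v hh h
      · exact hd 2 4 (by decide) v hh h
  -- (β) : key lemma on the three matchings
  have dis : ∀ (i j k l : Fin 5), i ≠ k → i ≠ l → j ≠ k → j ≠ l →
      ∀ (Wa Wb : List Stp), (∀ z ∈ wverts Wa, z ∈ B i ∪ B j) →
      (∀ z ∈ wverts Wb, z ∈ B k ∪ B l) → ∀ v ∈ wverts Wb, v ∉ wverts Wa := by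
    intro i j k l hik hil hjk hjl Wa Wb ma mb v hvb hva
    rcases ma v hva with h | h <;> rcases mb v hvb with h' | h'
    · exact hd i k hik v h h'
    · exact hd i l hil v h h'
    · exact hd j k hjk v h h'
    · exact hd j l hjl v h h'
  have k1 : σw W01 (c 2) + σw W01 (c 3) = link (c 0) W23 + link (c 1) W23 :=
    key w01 w23 (dis 0 1 2 3 (by decide) (by decide) (by decide) (by decide) W01 W23 m01 m23)
  have k2 : σw W02 (c 1) + σw W02 (c 3) = link (c 0) W13 + link (c 2) W13 :=
    key w02 w13 (dis 0 2 1 3 (by decide) (by decide) (by decide) (by decide) W02 W13 m02 m13)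
  have k3 : σw W03 (c 1) + σw W03 (c 2) = link (c 0) W12 + link (c 3) W12 :=
    key w03 w12 (dis 0 3 1 2 (by decide) (by decide) (by decide) (by decide) W03 W12 m03 m12)
  -- expansion of the four cycle σ values
  have ex : ∀ p : Pt,
      σw C0 p = σw W12 p + σw W23 p + σw W13 p ∧
      σw C1 p = σw W02 p + σw W23 p + σw W03 p ∧
      σw C2 p = σw W01 p + σw W13 p + σw W03 p ∧
      σw C3 p = σw W01 p + σw W12 p + σw W02 p := by
    intro p
    refine ⟨?_, ?_, ?_, ?_⟩ <;> simp only [hC0, hC1, hC2, hC3, σw_append, σw_rev] <;> ring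
  -- Dconf of the four hubs
  have hne : ∀ (i j : Fin 5), i ≠ j → c i ≠ c j := by
    intro i j hij he
    exact hd i j hij (c i) (hcmem i) (he ▸ hcmem j)
  have hD : Dconf (c 0) (c 1) (c 2) (c 3) :=
    ⟨hne 0 1 (by decide), hne 0 2 (by decide), hne 0 3 (by decide),
     hne 1 2 (by decide), hne 1 3 (by decide), hne 2 3 (by decide)⟩
  -- the T value of the hub configuration via the model arcs
  have hvw : VW (c 0) (c 1) (c 2) (c 3) W23 W13 W12 := by
    refine ⟨⟨w23, ?_, ?_⟩, ⟨w13, ?_, ?_⟩, ⟨w12, ?_, ?_⟩⟩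
    · intro hm; rcases m23 _ hm with h | h
      · exact hd 2 0 (by decide) _ h (hcmem 0)
      · exact hd 3 0 (by decide) _ h (hcmem 0)
    · intro hm; rcases m23 _ hm with h | h
      · exact hd 2 1 (by decide) _ h (hcmem 1)
      · exact hd 3 1 (by decide) _ h (hcmem 1)
    · intro hm; rcases m13 _ hm with h | h
      · exact hd 1 0 (by decide) _ h (hcmem 0)
      · exact hd 3 0 (by decide) _ h (hcmem 0)
    · intro hm; rcases m13 _ hm with h | h
      · exact hd 1 2 (by decide) _ h (hcmem 2)
      · exact hd 3 2 (by decide) _ h (hcmem 2)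
    · intro hm; rcases m12 _ hm with h | h
      · exact hd 1 0 (by decide) _ h (hcmem 0)
      · exact hd 2 0 (by decide) _ h (hcmem 0)
    · intro hm; rcases m12 _ hm with h | h
      · exact hd 1 3 (by decide) _ h (hcmem 3)
      · exact hd 2 3 (by decide) _ h (hcmem 3)
  have hT1 : Tf (c 0) (c 1) (c 2) (c 3) = 1 := Tf_one hD
  have hT0 : Tf (c 0) (c 1) (c 2) (c 3) = 0 := by
    rw [Tf_spec hD hvw]
    unfold Tsum lk
    obtain ⟨e0, e1, e2, e3⟩ := ex (c 0)
    obtain ⟨f0, f1, f2, f3⟩ := ex (c 1)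
    obtain ⟨g0, g1, g2, g3⟩ := ex (c 2)
    obtain ⟨i0, i1, i2, i3⟩ := ex (c 3)
    obtain ⟨p0, p1, p2, p3⟩ := ex (c 4)
    have hsum : σw C0 (c 0) + σw C1 (c 1) + σw C2 (c 2) + σw C3 (c 3) = 0 := by
      rw [const0, const1, const2, const3, p0, p1, p2, p3]
      linear_combination z2_self (σw W12 (c 4)) + z2_self (σw W23 (c 4)) +
        z2_self (σw W13 (c 4)) + z2_self (σw W02 (c 4)) + z2_self (σw W03 (c 4)) +
        z2_self (σw W01 (c 4))
    rw [e0, f1, g2, i3] at hsum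
    linear_combination hsum + k1 + k2 + k3 + z2_self (link (c 0) W23) +
      z2_self (link (c 1) W23) + z2_self (link (c 0) W13) + z2_self (link (c 2) W13) +
      z2_self (link (c 0) W12) + z2_self (link (c 3) W12) - z2_self (σw W01 (c 2)) -
      z2_self (σw W01 (c 3)) - z2_self (σw W02 (c 1)) - z2_self (σw W02 (c 3)) -
      z2_self (σw W03 (c 1)) - z2_self (σw W03 (c 2))
  rw [hT1] at hT0
  exact absurd hT0 (by decide)

end K6P

/-- For every positive integer `n`, the apex `n × n` grid `A_n` is `K_6`-minor-free. -/
theorem statement12 (n : ℕ) (hn : 0 < n) :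
    ¬ IsMinor (SimpleGraph.completeGraph (Fin 6)) (apexGrid n) := by
  rintro ⟨φ, hconn, hdisj, hadj⟩
  classical
  set u₀ : (Fin n × Fin n) ⊕ Unit := Sum.inr () with hu₀
  -- an index whose branch set might contain the apex
  set a₀ : Fin 6 := if h : ∃ a, u₀ ∈ φ a then h.choose else 0 with ha₀
  have hapex : ∀ k : Fin 5, u₀ ∉ φ (a₀.succAbove k) := by
    intro k hk
    have hex : ∃ a, u₀ ∈ φ a := ⟨_, hk⟩
    have h0 : u₀ ∈ φ a₀ := by rw [ha₀, dif_pos hex]; exact hex.choose_spec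
    have hne : a₀.succAbove k ≠ a₀ := Fin.succAbove_ne a₀ k
    exact Set.disjoint_left.mp (hdisj hne) hk h0
  set ι : Fin 5 → Fin 6 := a₀.succAbove with hι
  have hιinj : Function.Injective ι := Fin.succAbove_right_injective
  set emb : Fin n × Fin n → K6P.Pt := fun p => ((p.1 : ℤ), (p.2 : ℤ)) with hemb
  have hembinj : Function.Injective emb := by
    intro p q h
    rw [hemb] at h
    rw [Prod.mk.injEq] at h
    have h1 : (p.1 : ℕ) = q.1 := by exact_mod_cast h.1
    have h2 : (p.2 : ℕ) = q.2 := by exact_mod_cast h.2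
    ext
    · exact h1
    · exact h2
  have hinl : ∀ (k : Fin 5) (v : (Fin n × Fin n) ⊕ Unit), v ∈ φ (ι k) →
      ∃ p, v = Sum.inl p := by
    intro k v hv
    cases v with
    | inl p => exact ⟨p, rfl⟩
    | inr u =>
        cases u
        exact absurd hv (hapex k)
  -- adjacency of grid vertices gives unit steps
  have hstep : ∀ p q : Fin n × Fin n, (apexGrid n).Adj (Sum.inl p) (Sum.inl q) →
      K6P.UStep (emb p, emb q) := by
    intro p q hadj'
    rw [apexGrid, SimpleGraph.fromRel_adj] at hadj'
    have hg : GridAdj n p q ∨ GridAdj n q p := by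
      rcases hadj'.2 with (⟨p', q', hp', hq', hg⟩ | ⟨p', hp', hq'⟩) |
        (⟨p', q', hp', hq', hg⟩ | ⟨p', hp', hq'⟩)
      · rw [Sum.inl.injEq] at hp' hq'
        exact Or.inl (hp' ▸ hq' ▸ hg)
      · exact absurd hq' (by simp)
      · rw [Sum.inl.injEq] at hp' hq'
        exact Or.inr (hp' ▸ hq' ▸ hg)
      · exact absurd hq' (by simp)
    unfold K6P.UStep
    rw [hemb]
    dsimp only
    rcases hg with (⟨h1, h2⟩ | ⟨h1, h2⟩) | (⟨h1, h2⟩ | ⟨h1, h2⟩)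
    · have e := congrArg Fin.val h1; omega
    · have e := congrArg Fin.val h2; omega
    · have e := congrArg Fin.val h1; omega
    · have e := congrArg Fin.val h2; omega
  -- the five branch sets inside ℤ × ℤ
  set B : Fin 5 → Set K6P.Pt :=
    fun k => {z | ∃ p : Fin n × Fin n, Sum.inl p ∈ φ (ι k) ∧ z = emb p} with hB
  -- walk conversion
  have wconv : ∀ (k : Fin 5) (u v : ↥(φ (ι k)))
      (w : ((apexGrid n).induce (φ (ι k))).Walk u v) (p q : Fin n × Fin n),
      u.1 = Sum.inl p → v.1 = Sum.inl q →
      ∃ L, K6P.IsWalk L (emb p) (emb q) ∧ ∀ z ∈ K6P.wverts L, z ∈ B k := by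
    intro k u v w
    induction w with
    | nil =>
        intro p q hp hq
        refine ⟨[], ?_, by simp⟩
        have heq : (Sum.inl p : (Fin n × Fin n) ⊕ Unit) = Sum.inl q := by rw [← hp, ← hq]
        rw [Sum.inl.injEq] at heq
        rw [heq]
        rfl
    | @cons x m y h w ih =>
        intro p q hp hq
        have hm : ∃ r, m.1 = Sum.inl r := by
          obtain ⟨r, hr⟩ := hinl k m.1 m.2
          exact ⟨r, hr⟩
        obtain ⟨r, hr⟩ := hm
        obtain ⟨L, hL, hmem⟩ := ih r q hr hq
        have hadj2 : (apexGrid n).Adj (Sum.inl p) (Sum.inl r) := by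
          have : (apexGrid n).Adj x.1 m.1 := h
          rwa [hp, hr] at this
        refine ⟨(emb p, emb r) :: L, ⟨rfl, hstep p r hadj2, hL⟩, ?_⟩
        intro z hz
        rcases K6P.mem_wverts_cons.mp hz with rfl | rfl | hz
        · exact ⟨p, by rw [← hp]; exact x.2, rfl⟩
        · exact ⟨r, by rw [← hr]; exact m.2, rfl⟩
        · exact hmem z hz
  -- SConn
  have hSc : ∀ k, K6P.SConn (B k) := by
    intro k
    constructor
    · obtain ⟨⟨v, hv⟩⟩ := (hconn (ι k)).nonempty
      obtain ⟨p, rfl⟩ := hinl k v hv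
      exact ⟨emb p, p, hv, rfl⟩
    · rintro u ⟨p, hp, rfl⟩ v ⟨q, hq, rfl⟩
      have hreach := (hconn (ι k)).preconnected ⟨Sum.inl p, hp⟩ ⟨Sum.inl q, hq⟩
      obtain ⟨w⟩ := hreach
      exact wconv k _ _ w p q rfl rfl
  -- disjointness
  have hSd : ∀ i j : Fin 5, i ≠ j → ∀ p, p ∈ B i → p ∉ B j := by
    rintro i j hij z ⟨p, hp, rfl⟩ ⟨q, hq, he⟩
    have : p = q := hembinj he
    subst this
    exact Set.disjoint_left.mp (hdisj (fun hh => hij (hιinj hh))) hp hq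
  -- adjacency
  have hSa : ∀ i j : Fin 5, i ≠ j → K6P.SAdj (B i) (B j) := by
    intro i j hij
    have : (SimpleGraph.completeGraph (Fin 6)).Adj (ι i) (ι j) := by
      simp only [SimpleGraph.completeGraph, SimpleGraph.top_adj]
      exact fun hh => hij (hιinj hh)
    obtain ⟨u, hu, v, hv, huv⟩ := hadj (ι i) (ι j) this
    obtain ⟨p, rfl⟩ := hinl i u hu
    obtain ⟨q, rfl⟩ := hinl j v hv
    exact ⟨emb p, ⟨p, hu, rfl⟩, emb q, ⟨q, hv, rfl⟩, hstep p q huv⟩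
  exact K6P.no5 B hSc hSd hSa
end

section
/- For all positive integers g and n, the graph G_{g,n} has girth at least g. -/
/-- `attachPaths B n m g e`: the graph obtained from `B` (whose `m` vertices are
enumerated as `b_1, …, b_m` by the equivalence `e`) by adding `n` new pairwise disjoint
paths `P_1, …, P_n`, each with `g * m` vertices, all disjoint from `B`, and joining, for
every `i ∈ {1, …, m}` and `j ∈ {1, …, n}`, the `(g*i − 1)`-st vertex of `P_j` to `b_i`.
(The `k`-th vertex of `P_j`, 1-based, is `Sum.inr (j, k-1)`; the vertex `b_i` is
`Sum.inl (e (i-1))`; the joining condition reads `(k - 1) + 2 = g * i`.) -/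
def attachPaths {β : Type*} (B : SimpleGraph β) (n m g : ℕ) (e : Fin m ≃ β) :
    SimpleGraph (β ⊕ (Fin n × Fin (g * m))) :=
  SimpleGraph.fromRel (fun x y =>
    (∃ u v : β, x = Sum.inl u ∧ y = Sum.inl v ∧ B.Adj u v) ∨
    (∃ (j : Fin n) (k l : Fin (g * m)),
      x = Sum.inr (j, k) ∧ y = Sum.inr (j, l) ∧ (k : ℕ) + 1 = (l : ℕ)) ∨
    (∃ (j : Fin n) (i : Fin m) (k : Fin (g * m)),
      (k : ℕ) + 2 = g * ((i : ℕ) + 1) ∧ x = Sum.inr (j, k) ∧ y = Sum.inl (e i)))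

/-- The enumeration `e` of the vertices of a disjoint union of copies lists the vertices
of each copy consecutively: the indices enumerating any given copy form an interval. -/
def EnumConsecutive {V : Type*} (n m : ℕ) (e : Fin m ≃ Fin n × V) : Prop :=
  ∀ i j k : Fin m, i ≤ j → j ≤ k → (e i).1 = (e k).1 → (e j).1 = (e i).1

/-! ### Auxiliary lemmas -/

section Aux

open SimpleGraph

/-- Two distinct neighbors of the start of a cycle. -/
lemma cycle_start_two_neighbors {V : Type*} {G : SimpleGraph V} {x : V} (c : G.Walk x x)
    (hc : c.IsCycle) :
    ∃ y z, y ∈ c.support ∧ z ∈ c.support ∧ y ≠ z ∧ G.Adj x y ∧ G.Adj x z := by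
  have h3 := hc.three_le_length
  obtain ⟨a, ha, p, rfl⟩ := (SimpleGraph.Walk.not_nil_iff).mp hc.not_nil
  rw [SimpleGraph.Walk.cons_isCycle_iff] at hc
  obtain ⟨hp, he⟩ := hc
  have hpn : ¬ p.reverse.Nil := by
    rw [SimpleGraph.Walk.nil_iff_length_eq, SimpleGraph.Walk.length_reverse]
    simp only [SimpleGraph.Walk.length_cons] at h3; omega
  obtain ⟨b, hb, q, hq⟩ := (SimpleGraph.Walk.not_nil_iff).mp hpn
  have hbp : b ∈ p.support := by
    have hb1 : b ∈ p.reverse.support := by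
      rw [hq, SimpleGraph.Walk.support_cons]
      exact List.mem_cons_of_mem _ q.start_mem_support
    rwa [SimpleGraph.Walk.support_reverse, List.mem_reverse] at hb1
  have hedge : s(x, b) ∈ p.edges := by
    have hb1 : s(x, b) ∈ p.reverse.edges := by
      rw [hq, SimpleGraph.Walk.edges_cons]
      exact List.mem_cons_self
    rwa [SimpleGraph.Walk.edges_reverse, List.mem_reverse] at hb1
  refine ⟨a, b, ?_, ?_, ?_, ha, hb⟩
  · rw [SimpleGraph.Walk.support_cons]
    exact List.mem_cons_of_mem _ p.start_mem_support
  · rw [SimpleGraph.Walk.support_cons]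
    exact List.mem_cons_of_mem _ hbp
  · rintro rfl
    exact he hedge

/-- Every vertex on a cycle has two distinct neighbors on the cycle. -/
lemma cycle_two_neighbors {V : Type*} [DecidableEq V] {G : SimpleGraph V} {v x : V} {w : G.Walk v v}
    (hw : w.IsCycle) (hx : x ∈ w.support) :
    ∃ y z, y ∈ w.support ∧ z ∈ w.support ∧ y ≠ z ∧ G.Adj x y ∧ G.Adj x z := by
  obtain ⟨y, z, hy, hz, hyz, h1, h2⟩ := cycle_start_two_neighbors (w.rotate x hx) (hw.rotate hx)
  have hsub : ∀ u, u ∈ (w.rotate x hx).support → u ∈ w.support := by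
    intro u hu
    rcases (SimpleGraph.Walk.mem_support_iff _).mp hu with rfl | hu'
    · exact hx
    · exact List.mem_of_mem_tail (((SimpleGraph.Walk.support_rotate w x hx).mem_iff).mp hu')
  exact ⟨y, z, hsub y hy, hsub z hz, hyz, h1, h2⟩

/-- The number of distinct vertices of a cycle is at most its length. -/
lemma cycle_card_le_length {V : Type*} [DecidableEq V] {G : SimpleGraph V} {v : V}
    {w : G.Walk v v} (hw : w.IsCycle) : w.support.toFinset.card ≤ w.length := by
  have hnil := hw.not_nil
  have hv : v ∈ w.support.tail := by
    rw [← SimpleGraph.Walk.support_tail_of_not_nil w hnil]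
    exact SimpleGraph.Walk.end_mem_support _
  have hsupp : w.support = v :: w.support.tail := by
    conv_lhs => rw [← SimpleGraph.Walk.cons_support_tail hnil]
    rw [SimpleGraph.Walk.support_tail_of_not_nil w hnil]
  have hts : w.support.toFinset = w.support.tail.toFinset := by
    conv_lhs => rw [hsupp]
    rw [List.toFinset_cons, Finset.insert_eq_self.mpr (List.mem_toFinset.mpr hv)]
  rw [hts]
  calc w.support.tail.toFinset.card ≤ w.support.tail.length := w.support.tail.toFinset_card_le
    _ = w.length := by
        rw [List.length_tail, SimpleGraph.Walk.length_support]; omega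

section Subdivision

variable {W : Type*} {H : SimpleGraph W} {g : ℕ}

lemma subdivRel_symm {a b} (h : SubdivRel H g a b) : SubdivRel H g b a := by
  obtain ⟨h1, h2, h3⟩ := h
  exact ⟨h2.symm, h1.symm, by omega⟩

lemma subdivRel_eq_of_rel_rel {a b c} (hab : SubdivRel H g a b) (hbc : SubdivRel H g b c) :
    a = c := by
  obtain ⟨h1, h2, h3⟩ := hab
  obtain ⟨h4, h5, h6⟩ := hbc
  have hfst : a.1 = c.1 := by
    apply Subtype.ext
    apply Prod.ext
    · exact h1.trans h5
    · exact h2.trans h4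
  have hsnd : a.2 = c.2 := by
    apply Fin.ext
    omega
  exact Prod.ext hfst hsnd

lemma subdivRel_quot_exact {a b} (h : Quot.mk (SubdivRel H g) a = Quot.mk (SubdivRel H g) b) :
    a = b ∨ SubdivRel H g a b := by
  have h' := Quot.eq.mp h
  clear h
  induction h' with
  | rel x y hxy => exact Or.inr hxy
  | refl x => exact Or.inl rfl
  | symm x y _ ih =>
      rcases ih with rfl | hr
      · exact Or.inl rfl
      · exact Or.inr (subdivRel_symm hr)
  | trans x y z _ _ ih1 ih2 =>
      rcases ih1 with rfl | hr1
      · exact ih2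
      · rcases ih2 with rfl | hr2
        · exact Or.inr hr1
        · exact Or.inl (subdivRel_eq_of_rel_rel hr1 hr2)

lemma subdiv_quot_inj {d : {d : W × W // H.Adj d.1 d.2}} {i j : Fin g}
    (h : Quot.mk (SubdivRel H g) (d, i) = Quot.mk (SubdivRel H g) (d, j)) : i = j := by
  rcases subdivRel_quot_exact h with heq | ⟨h1, -, -⟩
  · exact (Prod.ext_iff.mp heq).2
  · exact absurd h1 d.2.ne

/-- Characterization of neighbors of an internal subdivision vertex. -/
lemma subdiv_adj_internal {d : {d : W × W // H.Adj d.1 d.2}} {i : Fin g} {y : SubdivVert H g}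
    (h : (subdiv H g).Adj (Sum.inr (Quot.mk (SubdivRel H g) (d, i))) y) :
    (∃ j : Fin g, (((j : ℕ) = (i : ℕ) + 1) ∨ ((j : ℕ) + 1 = (i : ℕ))) ∧
        y = Sum.inr (Quot.mk (SubdivRel H g) (d, j)))
    ∨ ((i : ℕ) = 0 ∧ y = Sum.inl d.1.1) ∨ ((i : ℕ) + 1 = g ∧ y = Sum.inl d.1.2) := by
  simp only [subdiv, SimpleGraph.fromRel_adj] at h
  obtain ⟨-, h | h⟩ := h
  · rcases h with ⟨-, u, v, -, hx, -⟩ | ⟨d', i', -, hx, -⟩ | ⟨d', i', j', hij, hx, hy⟩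
    · exact absurd hx (by simp)
    · exact absurd hx (by simp)
    · replace hx := Sum.inr.inj hx
      rcases subdivRel_quot_exact hx with heq | ⟨r1, r2, r3⟩
      · rw [Prod.mk.injEq] at heq
        obtain ⟨rfl, rfl⟩ := heq
        exact Or.inl ⟨j', Or.inl hij.symm, hy⟩
      · replace r3 : (i : ℕ) + (i' : ℕ) + 1 = g := r3
        have hj := j'.isLt
        have hi1 : 1 ≤ (i : ℕ) := by omega
        refine Or.inl ⟨⟨(i : ℕ) - 1, by omega⟩, Or.inr (by show (i:ℕ) - 1 + 1 = (i:ℕ); omega), ?_⟩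
        rw [hy]
        exact congrArg _ (Quot.sound ⟨r2.symm, r1.symm, by
          show (j' : ℕ) + ((i:ℕ) - 1) + 1 = g; omega⟩)
  · rcases h with ⟨-, u, v, -, -, hx⟩ | ⟨d', i', hi0, hy, hx⟩ | ⟨d', i', j', hij, hy, hx⟩
    · exact absurd hx (by simp)
    · replace hx := Sum.inr.inj hx
      rcases subdivRel_quot_exact hx with heq | ⟨r1, r2, r3⟩
      · rw [Prod.mk.injEq] at heq
        obtain ⟨rfl, rfl⟩ := heq
        exact Or.inr (Or.inl ⟨hi0, hy⟩)
      · replace r3 : (i : ℕ) + (i' : ℕ) + 1 = g := r3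
        refine Or.inr (Or.inr ⟨by omega, ?_⟩)
        rw [hy]
        exact congrArg _ r2.symm
    · replace hx := Sum.inr.inj hx
      rcases subdivRel_quot_exact hx with heq | ⟨r1, r2, r3⟩
      · rw [Prod.mk.injEq] at heq
        obtain ⟨rfl, rfl⟩ := heq
        exact Or.inl ⟨i', Or.inr hij, hy⟩
      · replace r3 : (i : ℕ) + (j' : ℕ) + 1 = g := r3
        have hilt := i'.isLt
        have hjlt := j'.isLt
        refine Or.inl ⟨⟨(i : ℕ) + 1, by omega⟩, Or.inl (by show (i:ℕ) + 1 = (i:ℕ) + 1; rfl), ?_⟩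
        rw [hy]
        exact congrArg _ (Quot.sound ⟨r2.symm, r1.symm, by
          show (i' : ℕ) + ((i:ℕ) + 1) + 1 = g; omega⟩)

lemma subdiv_adj_exists_inr (hg : g ≠ 0) {x y : SubdivVert H g}
    (h : (subdiv H g).Adj x y) : (∃ q, x = Sum.inr q) ∨ (∃ q, y = Sum.inr q) := by
  simp only [subdiv, SimpleGraph.fromRel_adj] at h
  obtain ⟨-, h | h⟩ := h
  · rcases h with ⟨h0, -⟩ | ⟨d, i, -, -, hy⟩ | ⟨d, i, j, -, -, hy⟩
    · exact absurd h0 hg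
    · exact Or.inr ⟨_, hy⟩
    · exact Or.inr ⟨_, hy⟩
  · rcases h with ⟨h0, -⟩ | ⟨d, i, -, -, hx⟩ | ⟨d, i, j, -, -, hx⟩
    · exact absurd h0 hg
    · exact Or.inl ⟨_, hx⟩
    · exact Or.inl ⟨_, hx⟩

end Subdivision

lemma nCopies_adj' {V : Type*} {K : SimpleGraph V} {n : ℕ} {x y : Fin n × V}
    (h : (nCopies n K).Adj x y) : x.1 = y.1 ∧ K.Adj x.2 y.2 := by
  simp only [nCopies, SimpleGraph.fromRel_adj] at h
  obtain ⟨-, ⟨h1, h2⟩ | ⟨h1, h2⟩⟩ := h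
  · exact ⟨h1, h2⟩
  · exact ⟨h1.symm, h2.symm⟩

section AttachPaths

variable {β : Type*} {B : SimpleGraph β} {n m g : ℕ} {e : Fin m ≃ β}

lemma att_adj_inr {j : Fin n} {k : Fin (g * m)} {y}
    (h : (attachPaths B n m g e).Adj (Sum.inr (j, k)) y) :
    (∃ l : Fin (g * m), (((l : ℕ) = (k : ℕ) + 1) ∨ ((l : ℕ) + 1 = (k : ℕ))) ∧
        y = Sum.inr (j, l)) ∨
    (∃ i : Fin m, (k : ℕ) + 2 = g * ((i : ℕ) + 1) ∧ y = Sum.inl (e i)) := by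
  simp only [attachPaths, SimpleGraph.fromRel_adj] at h
  obtain ⟨-, h | h⟩ := h
  · rcases h with ⟨u, v, hx, -⟩ | ⟨j', k', l', hx, hy, hkl⟩ | ⟨j', i', k', hk, hx, hy⟩
    · exact absurd hx (by simp)
    · have h12 := Sum.inr.inj hx
      rw [Prod.mk.injEq] at h12
      obtain ⟨rfl, rfl⟩ := h12
      exact Or.inl ⟨l', Or.inl (by omega), hy⟩
    · have h12 := Sum.inr.inj hx
      rw [Prod.mk.injEq] at h12
      obtain ⟨rfl, rfl⟩ := h12
      exact Or.inr ⟨i', by omega, hy⟩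
  · rcases h with ⟨u, v, hy, hx, hadj⟩ | ⟨j', k', l', hy, hx, hkl⟩ | ⟨j', i', k', hk, hy, hx⟩
    · exact absurd hx (by simp)
    · have h12 := Sum.inr.inj hx
      rw [Prod.mk.injEq] at h12
      obtain ⟨rfl, rfl⟩ := h12
      exact Or.inl ⟨k', Or.inr (by omega), hy⟩
    · exact absurd hx (by simp)

lemma att_adj_inl {u : β} {y}
    (h : (attachPaths B n m g e).Adj (Sum.inl u) y) (hy : ∀ p, y ≠ Sum.inr p) :
    ∃ v, y = Sum.inl v ∧ B.Adj u v := by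
  simp only [attachPaths, SimpleGraph.fromRel_adj] at h
  obtain ⟨-, h | h⟩ := h
  · rcases h with ⟨u', v', hx, hy', hadj⟩ | ⟨j', k', l', hx, -, -⟩ | ⟨j', i', k', -, hx, -⟩
    · rw [show u = u' from Sum.inl.inj hx] ; exact ⟨v', hy', hadj⟩
    · exact absurd hx (by simp)
    · exact absurd hx (by simp)
  · rcases h with ⟨u', v', hy', hx, hadj⟩ | ⟨j', k', l', hy', -, -⟩ | ⟨j', i', k', -, hy', -⟩
    · rw [show u = v' from Sum.inl.inj hx] ; exact ⟨u', hy', hadj.symm⟩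
    · exact absurd hy' (hy _)
    · exact absurd hy' (hy _)

end AttachPaths

end Aux
section Key

open SimpleGraph

variable {W : Type*} {H : SimpleGraph W} {g n m : ℕ}

/-- Membership of the `t`-th vertex of path `j` in `S`. -/
def PP (S : Finset ((Fin n × SubdivVert H g) ⊕ (Fin n × Fin (g * m))))
    (j : Fin n) (t : ℕ) : Prop :=
  ∃ h : t < g * m, Sum.inr (j, (⟨t, h⟩ : Fin (g * m))) ∈ S

/-- Membership of the `t`-th internal vertex of edge `d` in copy `c` in `S`. -/
def QQ (S : Finset ((Fin n × SubdivVert H g) ⊕ (Fin n × Fin (g * m))))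
    (c : Fin n) (d : {d : W × W // H.Adj d.1 d.2}) (t : ℕ) : Prop :=
  ∃ h : t < g,
    Sum.inl (c, Sum.inr (Quot.mk (SubdivRel H g) (d, (⟨t, h⟩ : Fin g)))) ∈ S

variable {e : Fin m ≃ Fin n × SubdivVert H g}

/-- `S` has "two distinct neighbors within `S`" at every vertex. -/
def Deg2 (e : Fin m ≃ Fin n × SubdivVert H g)
    (S : Finset ((Fin n × SubdivVert H g) ⊕ (Fin n × Fin (g * m)))) : Prop :=
  ∀ x ∈ S, ∃ y ∈ S, ∃ z ∈ S, y ≠ z ∧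
    (attachPaths (nCopies n (subdiv H g)) n m g e).Adj x y ∧
    (attachPaths (nCopies n (subdiv H g)) n m g e).Adj x z

variable {S : Finset ((Fin n × SubdivVert H g) ⊕ (Fin n × Fin (g * m)))}

lemma PP_of_mem {j : Fin n} {l : Fin (g * m)} (h : Sum.inr (j, l) ∈ S) : PP S j (l : ℕ) :=
  ⟨l.isLt, by rw [Fin.eta]; exact h⟩

lemma att_gap {a b : ℕ} {i₁ i₂ : Fin m} (ha : a + 2 = g * ((i₁ : ℕ) + 1))
    (hb : b + 2 = g * ((i₂ : ℕ) + 1)) (hab : a < b) : a + g ≤ b := by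
  have hlt : g * ((i₁ : ℕ) + 1) < g * ((i₂ : ℕ) + 1) := by
    calc g * ((i₁ : ℕ) + 1) = a + 2 := ha.symm
      _ < b + 2 := by omega
      _ = g * ((i₂ : ℕ) + 1) := hb
  have hxy : (i₁ : ℕ) + 1 < (i₂ : ℕ) + 1 := Nat.lt_of_mul_lt_mul_left hlt
  have h2 : g * ((i₁ : ℕ) + 1 + 1) ≤ g * ((i₂ : ℕ) + 1) := Nat.mul_le_mul_left _ (by omega)
  have h3 : g * ((i₁ : ℕ) + 1 + 1) = g * ((i₁ : ℕ) + 1) + g := by ring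
  have h4 : g * ((i₁ : ℕ) + 1) + g ≤ g * ((i₂ : ℕ) + 1) := by rw [← h3]; exact h2
  have h5 : a + 2 + g ≤ b + 2 := by rw [ha, hb]; exact h4
  omega

lemma pboth (hS : Deg2 e S) {j : Fin n} {t : ℕ} (hk : PP S j t)
    (hna : ∀ i : Fin m, t + 2 ≠ g * ((i : ℕ) + 1)) :
    0 < t ∧ PP S j (t - 1) ∧ PP S j (t + 1) := by
  obtain ⟨ht, hmem⟩ := hk
  obtain ⟨y, hyS, z, hzS, hyz, hady, hadz⟩ := hS _ hmem
  have hy := att_adj_inr hady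
  have hz := att_adj_inr hadz
  rcases hy with ⟨l₁, hl₁, hy⟩ | ⟨i₁, hi₁, -⟩
  swap
  · exact absurd (show t + 2 = g * ((i₁ : ℕ) + 1) from hi₁) (hna i₁)
  rcases hz with ⟨l₂, hl₂, hz⟩ | ⟨i₂, hi₂, -⟩
  swap
  · exact absurd (show t + 2 = g * ((i₂ : ℕ) + 1) from hi₂) (hna i₂)
  replace hl₁ : (l₁ : ℕ) = t + 1 ∨ (l₁ : ℕ) + 1 = t := hl₁
  replace hl₂ : (l₂ : ℕ) = t + 1 ∨ (l₂ : ℕ) + 1 = t := hl₂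
  rcases hl₁ with h1 | h1 <;> rcases hl₂ with h2 | h2
  · exfalso
    have : l₁ = l₂ := Fin.ext (by omega)
    exact hyz (by rw [hy, hz, this])
  · refine ⟨by omega, ?_, ?_⟩
    · have := PP_of_mem (hz ▸ hzS)
      rwa [show (l₂ : ℕ) = t - 1 by omega] at this
    · have := PP_of_mem (hy ▸ hyS)
      rwa [show (l₁ : ℕ) = t + 1 by omega] at this
  · refine ⟨by omega, ?_, ?_⟩
    · have := PP_of_mem (hy ▸ hyS)
      rwa [show (l₁ : ℕ) = t - 1 by omega] at this
    · have := PP_of_mem (hz ▸ hzS)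
      rwa [show (l₂ : ℕ) = t + 1 by omega] at this
  · exfalso
    have : l₁ = l₂ := Fin.ext (by omega)
    exact hyz (by rw [hy, hz, this])

lemma pmarch_up (hS : Deg2 e S) :
    ∀ (N : ℕ) (j : Fin n) (t : ℕ), g * m ≤ t + N → PP S j t →
      (∀ i : Fin m, t + 2 ≠ g * ((i : ℕ) + 1)) →
      ∃ a, t < a ∧ (∃ i : Fin m, a + 2 = g * ((i : ℕ) + 1)) ∧
        ∀ t', t ≤ t' → t' ≤ a → PP S j t' := by
  intro N
  induction N with
  | zero =>
      intro j t hN ht _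
      obtain ⟨hlt, -⟩ := ht
      omega
  | succ N ih =>
      intro j t hN ht hna
      obtain ⟨h0, hdn, hup⟩ := pboth hS ht hna
      by_cases hatt : ∃ i : Fin m, (t + 1) + 2 = g * ((i : ℕ) + 1)
      · refine ⟨t + 1, by omega, hatt, ?_⟩
        intro t' h1' h2'
        have h3' : t' = t ∨ t' = t + 1 := by omega
        rcases h3' with rfl | rfl
        exacts [ht, hup]
      · push_neg at hatt
        obtain ⟨a, ha1, ha2, ha3⟩ := ih j (t + 1) (by omega) hup hatt
        refine ⟨a, by omega, ha2, ?_⟩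
        intro t' h1' h2'
        rcases Nat.eq_or_lt_of_le h1' with rfl | hlt'
        exacts [ht, ha3 t' (by omega) h2']

lemma pmarch_down (hS : Deg2 e S) :
    ∀ (N : ℕ) (j : Fin n) (t : ℕ), t ≤ N → PP S j t →
      (∀ i : Fin m, t + 2 ≠ g * ((i : ℕ) + 1)) →
      ∃ a, a < t ∧ (∃ i : Fin m, a + 2 = g * ((i : ℕ) + 1)) ∧
        ∀ t', a ≤ t' → t' ≤ t → PP S j t' := by
  intro N
  induction N with
  | zero =>
      intro j t hN ht hna
      obtain ⟨h0, -, -⟩ := pboth hS ht hna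
      omega
  | succ N ih =>
      intro j t hN ht hna
      obtain ⟨h0, hdn, hup⟩ := pboth hS ht hna
      by_cases hatt : ∃ i : Fin m, (t - 1) + 2 = g * ((i : ℕ) + 1)
      · refine ⟨t - 1, by omega, hatt, ?_⟩
        intro t' h1' h2'
        have h3' : t' = t - 1 ∨ t' = t := by omega
        rcases h3' with rfl | rfl
        exacts [hdn, ht]
      · push_neg at hatt
        obtain ⟨a, ha1, ha2, ha3⟩ := ih j (t - 1) (by omega) hdn hatt
        refine ⟨a, by omega, ha2, ?_⟩
        intro t' h1' h2'
        rcases Nat.eq_or_lt_of_le h2' with rfl | hlt'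
        exacts [ht, ha3 t' h1' (by omega)]

lemma card_of_path (hg2 : 2 ≤ g) (hS : Deg2 e S) {j : Fin n} {k : Fin (g * m)}
    (hk : Sum.inr (j, k) ∈ S) : g ≤ S.card := by
  classical
  -- Step A: find a non-attachment path vertex of `S` on path `j`.
  obtain ⟨t₀, hPP₀, hna₀⟩ :
      ∃ t₀, PP S j t₀ ∧ ∀ i : Fin m, t₀ + 2 ≠ g * ((i : ℕ) + 1) := by
    by_cases hatt : ∃ i : Fin m, (k : ℕ) + 2 = g * ((i : ℕ) + 1)
    · obtain ⟨i₀, hi₀⟩ := hatt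
      obtain ⟨y, hyS, z, hzS, hyz, hady, hadz⟩ := hS _ hk
      have hy := att_adj_inr hady
      have hz := att_adj_inr hadz
      have keyl : ∀ (l : Fin (g * m)), ((l : ℕ) = (k : ℕ) + 1 ∨ (l : ℕ) + 1 = (k : ℕ)) →
          Sum.inr (j, l) ∈ S →
          ∃ t₀, PP S j t₀ ∧ ∀ i : Fin m, t₀ + 2 ≠ g * ((i : ℕ) + 1) := by
        intro l hl hlS
        refine ⟨(l : ℕ), PP_of_mem hlS, ?_⟩
        intro i' hcon
        rcases hl with h | h
        · have := att_gap hi₀ hcon (by omega)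
          omega
        · have := att_gap hcon hi₀ (by omega)
          omega
      rcases hy with ⟨l₁, hl₁, hy⟩ | ⟨i₁, hi₁, hy⟩
      · exact keyl l₁ hl₁ (hy ▸ hyS)
      · rcases hz with ⟨l₂, hl₂, hz⟩ | ⟨i₂, hi₂, hz⟩
        · exact keyl l₂ hl₂ (hz ▸ hzS)
        · exfalso
          have hmul : g * ((i₁ : ℕ) + 1) = g * ((i₂ : ℕ) + 1) := hi₁.symm.trans hi₂
          have : i₁ = i₂ := Fin.ext (by
            have := Nat.eq_of_mul_eq_mul_left (show 0 < g by omega) hmul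
            omega)
          exact hyz (by rw [hy, hz, this])
    · push_neg at hatt
      exact ⟨(k : ℕ), PP_of_mem hk, hatt⟩
  -- Step B: march in both directions.
  obtain ⟨b, hb1, ⟨i₂, hi₂⟩, hb3⟩ := pmarch_up hS (g * m) j t₀ (by omega) hPP₀ hna₀
  obtain ⟨a, ha1, ⟨i₁, hi₁⟩, ha3⟩ := pmarch_down hS t₀ j t₀ le_rfl hPP₀ hna₀
  have hgap : a + g ≤ b := att_gap hi₁ hi₂ (by omega)
  obtain ⟨hbnd, -⟩ := hb3 b (by omega) le_rfl
  -- Step C: count.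
  have hcard := Finset.card_le_card_of_injOn
    (s := Finset.Icc a b) (t := S)
    (fun t => if h' : t < g * m then Sum.inr (j, (⟨t, h'⟩ : Fin (g * m))) else Sum.inr (j, k))
    ?_ ?_
  · rw [Nat.card_Icc] at hcard
    omega
  · intro t htm
    rw [Finset.mem_coe, Finset.mem_Icc] at htm
    have hPt : PP S j t := by
      rcases le_or_gt t t₀ with hle | hlt
      · exact ha3 t htm.1 hle
      · exact hb3 t (by omega) htm.2
    obtain ⟨hlt', hmem'⟩ := hPt
    dsimp only
    rw [dif_pos hlt']
    exact hmem'
  · intro t1 h1 t2 h2 heq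
    simp only [Finset.coe_Icc, Set.mem_Icc] at h1 h2
    have hl1 : t1 < g * m := by omega
    have hl2 : t2 < g * m := by omega
    dsimp only at heq
    rw [dif_pos hl1, dif_pos hl2] at heq
    have h3 := Sum.inr.inj heq
    rw [Prod.mk.injEq] at h3
    exact congrArg Fin.val h3.2

end Key
section Key2

open SimpleGraph

variable {W : Type*} {H : SimpleGraph W} {g n m : ℕ}
variable {e : Fin m ≃ Fin n × SubdivVert H g}
variable {S : Finset ((Fin n × SubdivVert H g) ⊕ (Fin n × Fin (g * m)))}

lemma qboth (hg2 : 2 ≤ g) (hS : Deg2 e S)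
    (hnp : ∀ p : Fin n × Fin (g * m), Sum.inr p ∉ S)
    {c : Fin n} {d : {d : W × W // H.Adj d.1 d.2}} {t : ℕ} (ht : QQ S c d t) :
    (t + 1 < g → QQ S c d (t + 1)) ∧ (0 < t → QQ S c d (t - 1)) := by
  obtain ⟨hlt, hmem⟩ := ht
  obtain ⟨y, hyS, z, hzS, hyz, hady, hadz⟩ := hS _ hmem
  obtain ⟨v₁, hyv, hadj₁⟩ := att_adj_inl hady (fun p hp => hnp p (hp ▸ hyS))
  obtain ⟨v₂, hzv, hadj₂⟩ := att_adj_inl hadz (fun p hp => hnp p (hp ▸ hzS))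
  obtain ⟨hc₁, hsub₁⟩ := nCopies_adj' hadj₁
  obtain ⟨hc₂, hsub₂⟩ := nCopies_adj' hadj₂
  replace hc₁ : c = v₁.1 := hc₁
  replace hc₂ : c = v₂.1 := hc₂
  have hforms₁ := subdiv_adj_internal hsub₁
  have hforms₂ := subdiv_adj_internal hsub₂
  have build : ∀ (yy : (Fin n × SubdivVert H g) ⊕ (Fin n × Fin (g * m)))
      (vv : Fin n × SubdivVert H g) (jv : Fin g),
      yy ∈ S → yy = Sum.inl vv → c = vv.1 →
      vv.2 = Sum.inr (Quot.mk (SubdivRel H g) (d, jv)) →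
      ∀ (t' : ℕ) (h' : t' < g), (jv : ℕ) = t' → QQ S c d t' := by
    intro yy vv jv hSS hyy hcc hvv t' h' hjv
    refine ⟨h', ?_⟩
    have hveq : vv = (c, Sum.inr (Quot.mk (SubdivRel H g) (d, jv))) := Prod.ext hcc.symm hvv
    have hj : jv = (⟨t', h'⟩ : Fin g) := Fin.ext hjv
    rw [hyy, hveq, hj] at hSS
    exact hSS
  have eqcontra : ∀ (X : SubdivVert H g), v₁.2 = X → v₂.2 = X → False := by
    intro X h1 h2
    apply hyz
    have e1 : v₁ = (c, X) := Prod.ext hc₁.symm h1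
    have e2 : v₂ = (c, X) := Prod.ext hc₂.symm h2
    rw [hyv, hzv, e1, e2]
  constructor
  · intro hup
    rcases hforms₁ with ⟨j₁, hj₁, hv₁⟩ | ⟨h0₁, hv₁⟩ | ⟨hg₁, hv₁⟩
    · replace hj₁ : (j₁ : ℕ) = t + 1 ∨ (j₁ : ℕ) + 1 = t := hj₁
      rcases hj₁ with hup₁ | hdn₁
      · exact build y v₁ j₁ hyS hyv hc₁ hv₁ (t + 1) hup hup₁
      · rcases hforms₂ with ⟨j₂, hj₂, hv₂⟩ | ⟨h0₂, hv₂⟩ | ⟨hg₂, hv₂⟩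
        · replace hj₂ : (j₂ : ℕ) = t + 1 ∨ (j₂ : ℕ) + 1 = t := hj₂
          rcases hj₂ with hup₂ | hdn₂
          · exact build z v₂ j₂ hzS hzv hc₂ hv₂ (t + 1) hup hup₂
          · have hjj : j₂ = j₁ := Fin.ext (by omega)
            exact (eqcontra _ hv₁ (hjj ▸ hv₂)).elim
        · replace h0₂ : t = 0 := h0₂
          omega
        · replace hg₂ : t + 1 = g := hg₂
          omega
    · replace h0₁ : t = 0 := h0₁
      rcases hforms₂ with ⟨j₂, hj₂, hv₂⟩ | ⟨h0₂, hv₂⟩ | ⟨hg₂, hv₂⟩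
      · replace hj₂ : (j₂ : ℕ) = t + 1 ∨ (j₂ : ℕ) + 1 = t := hj₂
        rcases hj₂ with hup₂ | hdn₂
        · exact build z v₂ j₂ hzS hzv hc₂ hv₂ (t + 1) hup hup₂
        · omega
      · exact (eqcontra _ hv₁ hv₂).elim
      · replace hg₂ : t + 1 = g := hg₂
        omega
    · replace hg₁ : t + 1 = g := hg₁
      omega
  · intro hdn
    rcases hforms₁ with ⟨j₁, hj₁, hv₁⟩ | ⟨h0₁, hv₁⟩ | ⟨hg₁, hv₁⟩
    · replace hj₁ : (j₁ : ℕ) = t + 1 ∨ (j₁ : ℕ) + 1 = t := hj₁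
      rcases hj₁ with hup₁ | hdn₁
      · rcases hforms₂ with ⟨j₂, hj₂, hv₂⟩ | ⟨h0₂, hv₂⟩ | ⟨hg₂, hv₂⟩
        · replace hj₂ : (j₂ : ℕ) = t + 1 ∨ (j₂ : ℕ) + 1 = t := hj₂
          rcases hj₂ with hup₂ | hdn₂
          · have hjj : j₂ = j₁ := Fin.ext (by omega)
            exact (eqcontra _ hv₁ (hjj ▸ hv₂)).elim
          · exact build z v₂ j₂ hzS hzv hc₂ hv₂ (t - 1) (by omega) (by omega)
        · replace h0₂ : t = 0 := h0₂
          omega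
        · replace hg₂ : t + 1 = g := hg₂
          have := j₁.isLt
          omega
      · exact build y v₁ j₁ hyS hyv hc₁ hv₁ (t - 1) (by omega) (by omega)
    · replace h0₁ : t = 0 := h0₁
      omega
    · replace hg₁ : t + 1 = g := hg₁
      rcases hforms₂ with ⟨j₂, hj₂, hv₂⟩ | ⟨h0₂, hv₂⟩ | ⟨hg₂, hv₂⟩
      · replace hj₂ : (j₂ : ℕ) = t + 1 ∨ (j₂ : ℕ) + 1 = t := hj₂
        rcases hj₂ with hup₂ | hdn₂
        · have := j₂.isLt
          omega
        · exact build z v₂ j₂ hzS hzv hc₂ hv₂ (t - 1) (by omega) (by omega)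
      · replace h0₂ : t = 0 := h0₂
        omega
      · exact (eqcontra _ hv₁ hv₂).elim

lemma qmarch (hg2 : 2 ≤ g) (hS : Deg2 e S)
    (hnp : ∀ p : Fin n × Fin (g * m), Sum.inr p ∉ S)
    {c : Fin n} {d : {d : W × W // H.Adj d.1 d.2}} {t₀ : ℕ} (h0 : QQ S c d t₀) :
    ∀ t, t < g → QQ S c d t := by
  have hup : ∀ s, t₀ + s < g → QQ S c d (t₀ + s) := by
    intro s
    induction s with
    | zero => intro _; exact h0
    | succ s ih =>
        intro hs
        exact (qboth hg2 hS hnp (ih (by omega))).1 (by omega)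
  have hdn : ∀ s, s ≤ t₀ → QQ S c d (t₀ - s) := by
    intro s
    induction s with
    | zero => intro _; exact h0
    | succ s ih =>
        intro hs
        have h2 := (qboth hg2 hS hnp (ih (by omega))).2 (by omega)
        rwa [show t₀ - s - 1 = t₀ - (s + 1) by omega] at h2
  intro t htg
  rcases le_or_gt t t₀ with hle | hlt
  · have := hdn (t₀ - t) (by omega)
    rwa [show t₀ - (t₀ - t) = t by omega] at this
  · have := hup (t - t₀) (by omega)
    rwa [show t₀ + (t - t₀) = t by omega] at this

lemma card_of_internal (hg2 : 2 ≤ g) (hS : Deg2 e S)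
    (hnp : ∀ p : Fin n × Fin (g * m), Sum.inr p ∉ S)
    {c : Fin n} {d : {d : W × W // H.Adj d.1 d.2}} {i : Fin g}
    (h : Sum.inl (c, Sum.inr (Quot.mk (SubdivRel H g) (d, i))) ∈ S) : g ≤ S.card := by
  classical
  have h0 : QQ S c d (i : ℕ) := ⟨i.isLt, by rw [Fin.eta]; exact h⟩
  have hall := qmarch hg2 hS hnp h0
  have hcard := Finset.card_le_card_of_injOn
    (s := Finset.range g) (t := S)
    (fun t => if h' : t < g then
        Sum.inl (c, Sum.inr (Quot.mk (SubdivRel H g) (d, (⟨t, h'⟩ : Fin g))))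
      else Sum.inl (c, Sum.inl d.1.1))
    ?_ ?_
  · simpa using hcard
  · intro t htm
    rw [Finset.mem_coe, Finset.mem_range] at htm
    obtain ⟨h', hmem'⟩ := hall t htm
    dsimp only
    rw [dif_pos h']
    exact hmem'
  · intro t1 h1 t2 h2 heq
    simp only [Finset.coe_range, Set.mem_Iio] at h1 h2
    dsimp only at heq
    rw [dif_pos h1, dif_pos h2] at heq
    have h3 := Sum.inl.inj heq
    replace h3 := Prod.mk.inj h3
    have h4 := Sum.inr.inj h3.2
    have h5 := subdiv_quot_inj h4
    exact congrArg Fin.val h5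

lemma key_card (hg2 : 2 ≤ g) (hne : S.Nonempty) (hS : Deg2 e S) : g ≤ S.card := by
  classical
  by_cases hpath : ∃ (j : Fin n) (k : Fin (g * m)), Sum.inr (j, k) ∈ S
  · obtain ⟨j, k, hk⟩ := hpath
    exact card_of_path hg2 hS hk
  · push_neg at hpath
    have hnp : ∀ p : Fin n × Fin (g * m), Sum.inr p ∉ S := fun p => hpath p.1 p.2
    obtain ⟨x, hx⟩ := hne
    obtain ⟨y, hyS, z, hzS, hyz, hady, -⟩ := hS _ hx
    obtain ⟨u, rfl⟩ : ∃ u, x = Sum.inl u := by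
      cases x with
      | inl u => exact ⟨u, rfl⟩
      | inr p => exact absurd hx (hnp p)
    obtain ⟨v, rfl, hadj⟩ := att_adj_inl hady (fun p hp => hnp p (hp ▸ hyS))
    obtain ⟨hc, hsub⟩ := nCopies_adj' hadj
    replace hc : u.1 = v.1 := hc
    rcases subdiv_adj_exists_inr (by omega) hsub with ⟨q, hq⟩ | ⟨q, hq⟩
    · obtain ⟨⟨d, i⟩, rfl⟩ := Quot.exists_rep q
      apply card_of_internal hg2 hS hnp (c := u.1) (d := d) (i := i)
      have hueq : u = (u.1, Sum.inr (Quot.mk (SubdivRel H g) (d, i))) := Prod.ext rfl hq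
      rw [← hueq]
      exact hx
    · obtain ⟨⟨d, i⟩, rfl⟩ := Quot.exists_rep q
      apply card_of_internal hg2 hS hnp (c := u.1) (d := d) (i := i)
      have hveq : v = (u.1, Sum.inr (Quot.mk (SubdivRel H g) (d, i))) := Prod.ext hc.symm hq
      rw [← hveq]
      exact hyS

end Key2
/-- For all positive integers `g` and `n`, the graph `G_{g,n}` — obtained from
`B_{g,n}` (the disjoint union of `n` copies of `A_n^(g)`, with its `m` vertices
enumerated so that the vertices of each copy are consecutive) by attaching `n` disjoint
paths with `g * m` vertices, joining the `(g*i − 1)`-st vertex of each path to `b_i` —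
has girth at least `g`. -/
theorem statement15 (g n : ℕ) (hg : 0 < g) (hn : 0 < n) (m : ℕ)
    (e : Fin m ≃ Fin n × SubdivVert (apexGrid n) g)
    (he : EnumConsecutive n m e) :
    (g : ℕ∞) ≤ (attachPaths (nCopies n (subdiv (apexGrid n) g)) n m g e).egirth := by
  classical
  by_cases hg2 : 2 ≤ g
  · rw [SimpleGraph.le_egirth]
    intro a w hw
    have hprop : Deg2 e w.support.toFinset := by
      intro x hx
      obtain ⟨y, z, hy, hz, hyz, h1, h2⟩ := cycle_two_neighbors hw (List.mem_toFinset.mp hx)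
      exact ⟨y, List.mem_toFinset.mpr hy, z, List.mem_toFinset.mpr hz, hyz, h1, h2⟩
    have h1 : g ≤ w.support.toFinset.card :=
      key_card hg2 ⟨a, List.mem_toFinset.mpr w.start_mem_support⟩ hprop
    have h2 : w.support.toFinset.card ≤ w.length := cycle_card_le_length hw
    exact_mod_cast Nat.cast_le.mpr (h1.trans h2)
  · have hg1 : g = 1 := by omega
    subst hg1
    calc ((1 : ℕ) : ℕ∞) ≤ 3 := by norm_num
      _ ≤ _ := SimpleGraph.three_le_egirth
end
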